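/- arXiv:1905.04861 — 3 statements merged into one kernel-verified Lean document; each statement's English description precedes it below -/
import Mathlib

section
/- Let (Ω, ℱ₂, P) be a probability space with sub-σ-algebras ℱ₁ ⊆ ℱ₂, and suppose ℱ₂ is atomless conditionally to ℱ₁. Then for any two integrable ℱ₁-measurable random variables f, g : Ω → ℝ there exist integrable ℱ₂-measurable random variables ξ, η : Ω → ℝ such that ξ and η are commonotone, E[ξ ∣ ℱ₁] = f almost surely, and E[η ∣ ℱ₁] = g almost surely. -/
open MeasureTheory ProbabilityTheory Set Filter

/-- The conditional expectation of the indicator of a set, as a real-valued function. -/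
noncomputable def condIndicator {Ω : Type*} (m1 : MeasurableSpace Ω) [MeasurableSpace Ω]
    (μ : Measure Ω) (A : Set Ω) : Ω → ℝ :=
  μ[A.indicator (fun _ => (1 : ℝ)) | m1]

/-- The ambient σ-algebra is atomless conditionally to `m1`: for every measurable set `A`
there is a measurable `B ⊆ A` with `0 < E[1_B ∣ m1] < E[1_A ∣ m1]` a.s. on
`{E[1_A ∣ m1] > 0}`. -/
def CondAtomless {Ω : Type*} (m1 : MeasurableSpace Ω) [MeasurableSpace Ω]
    (μ : Measure Ω) : Prop :=
  ∀ A : Set Ω, MeasurableSet A →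
    ∃ B : Set Ω, MeasurableSet B ∧ B ⊆ A ∧
      ∀ᵐ ω ∂μ, 0 < condIndicator m1 μ A ω →
        0 < condIndicator m1 μ B ω ∧ condIndicator m1 μ B ω < condIndicator m1 μ A ω

/-- Two real random variables are commonotone if both are a.s. equal to nondecreasing
functions of a common random variable. -/
def Commonotone {Ω : Type*} [MeasurableSpace Ω] (μ : Measure Ω) (ξ η : Ω → ℝ) : Prop :=
  ∃ (f g : ℝ → ℝ) (ζ : Ω → ℝ), Monotone f ∧ Monotone g ∧ Measurable ζ ∧
    ξ =ᵐ[μ] (fun ω => f (ζ ω)) ∧ η =ᵐ[μ] (fun ω => g (ζ ω))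

section Aux

variable {Ω : Type*} {m1 : MeasurableSpace Ω} [m2 : MeasurableSpace Ω]
  {μ : Measure Ω} [IsProbabilityMeasure μ]

lemma integrable_ind (A : Set Ω) (hA : MeasurableSet A) :
    Integrable (A.indicator (fun _ => (1:ℝ))) μ := by
  rw [integrable_indicator_iff hA]
  exact (integrable_const _).integrableOn

lemma cI_nonneg (A : Set Ω) : 0 ≤ᵐ[μ] condIndicator m1 μ A :=
  condExp_nonneg (Filter.Eventually.of_forall (fun ω => Set.indicator_nonneg (fun _ _ => zero_le_one) ω))

lemma cI_le_one (hm : m1 ≤ m2) (A : Set Ω) (hA : MeasurableSet A) :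
    condIndicator m1 μ A ≤ᵐ[μ] 1 := by
  have h := condExp_mono (μ := μ) (m := m1) (integrable_ind A hA) (integrable_const (1:ℝ))
    (Filter.Eventually.of_forall (fun ω => Set.indicator_le_self' (fun _ _ => zero_le_one) ω))
  have h2 : μ[(fun (_ : Ω) => (1:ℝ))|m1] = fun _ => (1:ℝ) := condExp_const hm 1
  filter_upwards [h] with ω hω
  simpa [h2, condIndicator] using hω

lemma cI_union (hm : m1 ≤ m2) {A B : Set Ω} (hA : MeasurableSet A) (hB : MeasurableSet B)
    (hd : Disjoint A B) :
    condIndicator m1 μ (A ∪ B) =ᵐ[μ] condIndicator m1 μ A + condIndicator m1 μ B := by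
  have : (A ∪ B).indicator (fun _ => (1:ℝ)) =
      A.indicator (fun _ => (1:ℝ)) + B.indicator (fun _ => (1:ℝ)) := by
    ext ω
    simp only [Pi.add_apply]
    by_cases h1 : ω ∈ A
    · rw [Set.indicator_of_mem (Set.mem_union_left _ h1), Set.indicator_of_mem h1,
        Set.indicator_of_notMem (fun h2 => hd.ne_of_mem h1 h2 rfl)]
      ring
    · by_cases h2 : ω ∈ B
      · rw [Set.indicator_of_mem (Set.mem_union_right _ h2), Set.indicator_of_notMem h1,
          Set.indicator_of_mem h2]; ring
      · rw [Set.indicator_of_notMem (fun h => h.elim h1 h2), Set.indicator_of_notMem h1,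
          Set.indicator_of_notMem h2]; ring
  unfold condIndicator
  rw [this]
  exact condExp_add (μ := μ) (m := m1) (integrable_ind A hA) (integrable_ind B hB)

lemma cI_diff (hm : m1 ≤ m2) {A B : Set Ω} (hA : MeasurableSet A) (hB : MeasurableSet B)
    (hBA : B ⊆ A) :
    condIndicator m1 μ (A \ B) =ᵐ[μ] condIndicator m1 μ A - condIndicator m1 μ B := by
  have h := cI_union (μ := μ) hm (hA.diff hB) hB disjoint_sdiff_self_left
  rw [Set.diff_union_of_subset hBA] at h
  filter_upwards [h] with ω hω
  simp only [Pi.add_apply] at hω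
  simp [hω]

lemma cI_mono (hm : m1 ≤ m2) {A B : Set Ω} (hA : MeasurableSet A) (hB : MeasurableSet B)
    (hAB : A ⊆ B) : condIndicator m1 μ A ≤ᵐ[μ] condIndicator m1 μ B :=
  condExp_mono (integrable_ind A hA) (integrable_ind B hB)
    (Filter.Eventually.of_forall (fun ω => Set.indicator_le_indicator_of_subset hAB
      (fun _ => zero_le_one) ω))

lemma cI_inter_m1 (hm : m1 ≤ m2) {A S : Set Ω} (hA : MeasurableSet A)
    (hS : MeasurableSet[m1] S) :
    condIndicator m1 μ (A ∩ S) =ᵐ[μ] S.indicator (condIndicator m1 μ A) := by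
  have h1 : (A ∩ S).indicator (fun _ => (1:ℝ)) = S.indicator (A.indicator (fun _ => (1:ℝ))) := by
    ext ω
    by_cases h2 : ω ∈ S <;> by_cases h3 : ω ∈ A <;>
      simp [Set.indicator_apply, h2, h3]
  unfold condIndicator
  rw [h1]
  exact condExp_indicator (integrable_ind A hA) hS

lemma cI_univ (hm : m1 ≤ m2) : condIndicator m1 μ (Set.univ : Set Ω) =ᵐ[μ] 1 := by
  unfold condIndicator
  rw [Set.indicator_univ, condExp_const hm]
  exact Filter.Eventually.of_forall fun ω => rfl

lemma cI_empty : condIndicator m1 μ (∅ : Set Ω) =ᵐ[μ] 0 := by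
  unfold condIndicator
  rw [Set.indicator_empty]
  show μ[(0 : Ω → ℝ)|m1] =ᵐ[μ] 0
  rw [condExp_zero]

lemma cI_meas (A : Set Ω) : StronglyMeasurable[m1] (condIndicator m1 μ A) :=
  stronglyMeasurable_condExp

lemma cI_setIntegral (hm : m1 ≤ m2) {A S : Set Ω} (hA : MeasurableSet A)
    (hS : MeasurableSet[m1] S) :
    ∫ ω in S, condIndicator m1 μ A ω ∂μ = (μ (A ∩ S)).toReal := by
  unfold condIndicator
  rw [setIntegral_condExp hm (integrable_ind A hA) hS]
  rw [setIntegral_indicator hA]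
  simp [Set.inter_comm, Measure.real]

lemma cI_null (hm : m1 ≤ m2) {A : Set Ω} (hA : μ A = 0) :
    condIndicator m1 μ A =ᵐ[μ] 0 := by
  unfold condIndicator
  have : A.indicator (fun _ => (1:ℝ)) =ᵐ[μ] 0 := by
    rw [Filter.eventuallyEq_iff_exists_mem]
    exact ⟨Aᶜ, by rwa [MeasureTheory.mem_ae_iff, compl_compl], fun ω hω => by
      simp [Set.indicator_of_notMem hω]⟩
  exact (condExp_congr_ae this).trans (by rw [condExp_zero])

end Aux

section Halving

variable {Ω : Type*} {m1 : MeasurableSpace Ω} [m2 : MeasurableSpace Ω]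
  {μ : Measure Ω} [IsProbabilityMeasure μ]

lemma halving (hm : m1 ≤ m2) (hat : CondAtomless m1 μ) {A : Set Ω} (hA : MeasurableSet A) :
    ∃ B : Set Ω, MeasurableSet B ∧ B ⊆ A ∧
      ∀ᵐ ω ∂μ, 0 < condIndicator m1 μ A ω →
        0 < condIndicator m1 μ B ω ∧
          condIndicator m1 μ B ω ≤ condIndicator m1 μ A ω / 2 := by
  obtain ⟨B, hB, hBA, hae⟩ := hat A hA
  have hSmeas : MeasurableSet[m1]
      {ω | condIndicator m1 μ B ω ≤ condIndicator m1 μ (A \ B) ω} :=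
    measurableSet_le (cI_meas _).measurable (cI_meas _).measurable
  set S := {ω | condIndicator m1 μ B ω ≤ condIndicator m1 μ (A \ B) ω} with hSdef
  have hd : Disjoint (B ∩ S) ((A \ B) ∩ Sᶜ) := by
    refine Set.disjoint_left.2 ?_
    rintro ω ⟨h1, _⟩ ⟨h2, _⟩
    exact h2.2 h1
  refine ⟨(B ∩ S) ∪ ((A \ B) ∩ Sᶜ), (hB.inter (hm _ hSmeas)).union
    ((hA.diff hB).inter (hm _ hSmeas.compl)), ?_, ?_⟩
  · rintro ω (h | h)
    · exact hBA h.1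
    · exact h.1.1
  · have e1 := cI_union (μ := μ) hm (hB.inter (hm _ hSmeas))
      ((hA.diff hB).inter (hm _ hSmeas.compl)) hd
    have e2 := cI_inter_m1 (μ := μ) hm hB hSmeas
    have e3 := cI_inter_m1 (μ := μ) hm (hA.diff hB) hSmeas.compl
    have e4 := cI_diff (μ := μ) hm hA hB hBA
    filter_upwards [hae, e1, e2, e3, e4] with ω h0 he1 he2 he3 he4 hpos
    obtain ⟨hb0, hba⟩ := h0 hpos
    have hABval : condIndicator m1 μ (A \ B) ω
        = condIndicator m1 μ A ω - condIndicator m1 μ B ω := he4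
    rw [he1]
    simp only [Pi.add_apply]
    rw [he2, he3]
    by_cases hωS : ω ∈ S
    · have hle : condIndicator m1 μ B ω ≤ condIndicator m1 μ (A \ B) ω := hωS
      rw [Set.indicator_of_mem hωS, Set.indicator_of_notMem (by simp [hωS])]
      constructor
      · simpa using hb0
      · rw [hABval] at hle; simp; linarith
    · have hgt : ¬ (condIndicator m1 μ B ω ≤ condIndicator m1 μ (A \ B) ω) := hωS
      push_neg at hgt
      rw [Set.indicator_of_notMem hωS, Set.indicator_of_mem (by simp [hωS])]
      rw [hABval] at hgt ⊢
      constructor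
      · simp; linarith
      · simp; linarith

lemma small_pieces (hm : m1 ≤ m2) (hat : CondAtomless m1 μ) {D : Set Ω}
    (hD : MeasurableSet D) :
    ∃ P : ℕ → Set Ω, (∀ n, MeasurableSet (P n)) ∧ (∀ n, P n ⊆ D) ∧
      ∀ᵐ ω ∂μ, 0 < condIndicator m1 μ D ω →
        ∀ n, 0 < condIndicator m1 μ (P n) ω ∧
          condIndicator m1 μ (P n) ω ≤ (1/2 : ℝ)^n * condIndicator m1 μ D ω := by
  have key : ∀ p : {B : Set Ω // MeasurableSet B}, ∃ q : {B : Set Ω // MeasurableSet B},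
      q.1 ⊆ p.1 ∧ ∀ᵐ ω ∂μ, 0 < condIndicator m1 μ p.1 ω →
        0 < condIndicator m1 μ q.1 ω ∧
          condIndicator m1 μ q.1 ω ≤ condIndicator m1 μ p.1 ω / 2 := by
    rintro ⟨B, hB⟩
    obtain ⟨B', h1, h2, h3⟩ := halving hm hat hB
    exact ⟨⟨B', h1⟩, h2, h3⟩
  choose nxt hsub hae using key
  set Q : ℕ → {B : Set Ω // MeasurableSet B} := fun n => nxt^[n] ⟨D, hD⟩ with hQ
  have hQsucc : ∀ n, Q (n+1) = nxt (Q n) := by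
    intro n
    rw [hQ]
    exact Function.iterate_succ_apply' nxt n _
  refine ⟨fun n => (Q n).1, fun n => (Q n).2, ?_, ?_⟩
  · intro n
    induction n with
    | zero => exact fun _ h => h
    | succ k ih =>
      show (Q (k+1)).1 ⊆ D
      rw [hQsucc k]
      exact fun ω hω => ih (hsub (Q k) hω)
  · have hall : ∀ᵐ ω ∂μ, ∀ n, 0 < condIndicator m1 μ (Q n).1 ω →
        0 < condIndicator m1 μ (nxt (Q n)).1 ω ∧
          condIndicator m1 μ (nxt (Q n)).1 ω ≤ condIndicator m1 μ (Q n).1 ω / 2 :=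
      ae_all_iff.2 fun n => hae (Q n)
    filter_upwards [hall] with ω hω hpos n
    induction n with
    | zero => simpa using ⟨hpos, le_refl _⟩
    | succ k ih =>
      obtain ⟨ih1, ih2⟩ := ih
      have := hω k ih1
      rw [hQsucc k]
      refine ⟨this.1, ?_⟩
      calc condIndicator m1 μ (nxt (Q k)).1 ω ≤ condIndicator m1 μ (Q k).1 ω / 2 := this.2
        _ ≤ ((1/2:ℝ)^k * condIndicator m1 μ D ω) / 2 := by linarith
        _ = (1/2:ℝ)^(k+1) * condIndicator m1 μ D ω := by ring

end Halving

section ExactSplit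

variable {Ω : Type*} {m1 : MeasurableSpace Ω} [m2 : MeasurableSpace Ω]
  {μ : Measure Ω} [IsProbabilityMeasure μ]

lemma integral_cI (hm : m1 ≤ m2) {S : Set Ω} (hS : MeasurableSet S) :
    ∫ ω, condIndicator m1 μ S ω ∂μ = (μ S).toReal := by
  unfold condIndicator
  rw [integral_condExp hm, integral_indicator hS]
  simp [Measure.real]

lemma cI_iUnion_le (hm : m1 ≤ m2) {E : ℕ → Set Ω} (hE : ∀ n, MeasurableSet (E n))
    (hmono : Monotone E) {v : Ω → ℝ}
    (hle : ∀ n, condIndicator m1 μ (E n) ≤ᵐ[μ] v) :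
    condIndicator m1 μ (⋃ n, E n) ≤ᵐ[μ] v := by
  set Es := ⋃ n, E n with hEs
  have hEsm : MeasurableSet Es := MeasurableSet.iUnion hE
  have hsub : ∀ n, E n ⊆ Es := fun n => Set.subset_iUnion E n
  set g : ℕ → Ω → ℝ := fun n => condIndicator m1 μ (Es \ E n) with hg
  have hgdiff : ∀ n, g n =ᵐ[μ] condIndicator m1 μ Es - condIndicator m1 μ (E n) :=
    fun n => cI_diff hm hEsm (hE n) (hsub n)
  have hgnonneg : ∀ᵐ ω ∂μ, ∀ n, 0 ≤ g n ω := ae_all_iff.2 fun n => cI_nonneg _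
  have hgmeas : ∀ n, Measurable (g n) :=
    fun n => ((cI_meas (Es \ E n)).measurable).mono hm le_rfl
  set L : Ω → ℝ := fun ω => ⨅ n, g n ω with hL
  have hLmeas : Measurable L := Measurable.iInf hgmeas
  have hL0 : 0 ≤ᵐ[μ] L := by
    filter_upwards [hgnonneg] with ω hω
    exact le_ciInf fun n => hω n
  have hLle : ∀ᵐ ω ∂μ, ∀ n, L ω ≤ g n ω := by
    filter_upwards [hgnonneg] with ω hω n
    exact ciInf_le ⟨0, fun x ⟨k, hk⟩ => hk ▸ hω k⟩ n
  have hLint : Integrable L μ := by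
    refine Integrable.mono'
      (integrable_condExp : Integrable (condIndicator m1 μ (Es \ E 0)) μ)
      hLmeas.aestronglyMeasurable ?_
    filter_upwards [hL0, hLle] with ω h0 hle'
    rw [Real.norm_eq_abs, abs_of_nonneg h0]
    exact hle' 0
  have hint : ∀ n, ∫ ω, L ω ∂μ ≤ (μ (Es \ E n)).toReal := by
    intro n
    rw [← integral_cI (μ := μ) hm (hEsm.diff (hE n))]
    refine integral_mono_ae hLint (integrable_condExp) ?_
    filter_upwards [hLle] with ω hω using hω n
  have htendE : Filter.Tendsto (fun n => μ (E n)) Filter.atTop (nhds (μ Es)) := by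
    rw [hEs]
    exact tendsto_measure_iUnion_atTop hmono
  have htend : Filter.Tendsto (fun n => (μ (Es \ E n)).toReal) Filter.atTop (nhds 0) := by
    have hdiff : ∀ n, μ (Es \ E n) = μ Es - μ (E n) :=
      fun n => measure_diff (hsub n) (hE n).nullMeasurableSet (measure_ne_top μ _)
    have h1 : Filter.Tendsto (fun n => μ Es - μ (E n)) Filter.atTop (nhds (μ Es - μ Es)) :=
      ENNReal.Tendsto.sub tendsto_const_nhds htendE (Or.inl (measure_ne_top μ Es))
    rw [tsub_self] at h1
    have h2 : Filter.Tendsto (fun n => (μ Es - μ (E n)).toReal) Filter.atTop (nhds 0) := by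
      have h3 := (ENNReal.tendsto_toReal (a := 0) (by simp)).comp h1
      exact h3
    refine h2.congr ?_
    intro n
    rw [hdiff n]
  have hL_le0 : ∫ ω, L ω ∂μ ≤ 0 := ge_of_tendsto htend (Filter.Eventually.of_forall hint)
  have hLzero : L =ᵐ[μ] 0 := by
    have h0 : ∫ ω, L ω ∂μ = 0 := le_antisymm hL_le0 (integral_nonneg_of_ae hL0)
    exact (integral_eq_zero_iff_of_nonneg_ae hL0 hLint).1 h0
  have hEsdiff : ∀ n, condIndicator m1 μ Es ≤ᵐ[μ] fun ω => v ω + g n ω := by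
    intro n
    filter_upwards [hgdiff n, hle n] with ω h1 h2
    have : g n ω = condIndicator m1 μ Es ω - condIndicator m1 μ (E n) ω := h1
    linarith
  have hall : ∀ᵐ ω ∂μ, ∀ n, condIndicator m1 μ Es ω ≤ v ω + g n ω :=
    ae_all_iff.2 hEsdiff
  filter_upwards [hall, hLzero] with ω h1 h2
  have h2' : L ω = 0 := h2
  have h3 : condIndicator m1 μ Es ω - v ω ≤ L ω := le_ciInf fun n => by linarith [h1 n]
  linarith

end ExactSplit

section ExactSplit2

variable {Ω : Type*} {m1 : MeasurableSpace Ω} [m2 : MeasurableSpace Ω]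
  {μ : Measure Ω} [IsProbabilityMeasure μ]

lemma exact_split (hm : m1 ≤ m2) (hat : CondAtomless m1 μ) {A : Set Ω} (hA : MeasurableSet A)
    {v : Ω → ℝ} (hv : Measurable[m1] v) (hv0 : 0 ≤ᵐ[μ] v)
    (hvA : v ≤ᵐ[μ] condIndicator m1 μ A) :
    ∃ C : Set Ω, MeasurableSet C ∧ C ⊆ A ∧ condIndicator m1 μ C =ᵐ[μ] v := by
  classical
  set 𝒞 : Set (Set Ω) := {E | MeasurableSet E ∧ E ⊆ A ∧ condIndicator m1 μ E ≤ᵐ[μ] v}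
    with h𝒞
  have hempty : (∅ : Set Ω) ∈ 𝒞 := by
    refine ⟨MeasurableSet.empty, Set.empty_subset A, ?_⟩
    filter_upwards [cI_empty (m1 := m1) (μ := μ), hv0] with ω h1 h2
    rw [h1]; exact h2
  set R : Set Ω → Set ℝ := fun E0 => (fun F => (μ (F \ E0)).toReal) '' {F | F ∈ 𝒞 ∧ E0 ⊆ F}
    with hR
  have hbddR : ∀ E0, BddAbove (R E0) := by
    intro E0
    refine ⟨1, ?_⟩
    rintro x ⟨F, _, rfl⟩
    calc (μ (F \ E0)).toReal ≤ (μ (Set.univ : Set Ω)).toReal :=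
          ENNReal.toReal_mono (measure_ne_top μ _) (measure_mono (Set.subset_univ _))
      _ = 1 := by simp
  set δ : Set Ω → ℝ := fun E0 => sSup (R E0) with hδdef
  have step : ∀ p : {E : Set Ω // E ∈ 𝒞}, ∃ q : {E : Set Ω // E ∈ 𝒞},
      p.1 ⊆ q.1 ∧ δ p.1 / 2 ≤ (μ (q.1 \ p.1)).toReal := by
    rintro ⟨E0, hE0⟩
    by_cases h : δ E0 ≤ 0
    · exact ⟨⟨E0, hE0⟩, subset_rfl, le_trans (by linarith) ENNReal.toReal_nonneg⟩
    · push_neg at h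
      have hne : (R E0).Nonempty := ⟨(μ (E0 \ E0)).toReal, ⟨E0, ⟨hE0, subset_rfl⟩, rfl⟩⟩
      obtain ⟨x, hx, hlt⟩ := exists_lt_of_lt_csSup hne (show δ E0 / 2 < δ E0 by linarith)
      obtain ⟨F, ⟨hF, hsub⟩, rfl⟩ := hx
      exact ⟨⟨F, hF⟩, hsub, le_of_lt hlt⟩
  choose nxt hn1 hn2 using step
  set Q : ℕ → {E : Set Ω // E ∈ 𝒞} := fun n => nxt^[n] ⟨∅, hempty⟩ with hQ
  have hQsucc : ∀ n, Q (n+1) = nxt (Q n) := fun n => Function.iterate_succ_apply' nxt n _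
  set E : ℕ → Set Ω := fun n => (Q n).1 with hE
  have hEmeas : ∀ n, MeasurableSet (E n) := fun n => (Q n).2.1
  have hEsubA : ∀ n, E n ⊆ A := fun n => (Q n).2.2.1
  have hEle : ∀ n, condIndicator m1 μ (E n) ≤ᵐ[μ] v := fun n => (Q n).2.2.2
  have hmonoE : Monotone E := by
    refine monotone_nat_of_le_succ ?_
    intro n
    show E n ⊆ (Q (n+1)).1
    rw [hQsucc n]
    exact hn1 (Q n)
  set Estar := ⋃ n, E n with hEstar
  have hEstarm : MeasurableSet Estar := MeasurableSet.iUnion hEmeas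
  have hEstarA : Estar ⊆ A := Set.iUnion_subset hEsubA
  have hEstarle : condIndicator m1 μ Estar ≤ᵐ[μ] v := cI_iUnion_le hm hEmeas hmonoE hEle
  have hEsubstar : ∀ n, E n ⊆ Estar := fun n => Set.subset_iUnion E n
  set S := {ω | condIndicator m1 μ Estar ω < v ω} with hSdef
  by_cases hS0 : μ S = 0
  · refine ⟨Estar, hEstarm, hEstarA, ?_⟩
    have hae : ∀ᵐ ω ∂μ, ω ∉ S := measure_eq_zero_iff_ae_notMem.1 hS0
    filter_upwards [hae, hEstarle] with ω h1 h2
    have : ¬ (condIndicator m1 μ Estar ω < v ω) := h1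
    linarith [not_lt.1 this]
  · exfalso
    set D := A \ Estar with hD
    have hDm : MeasurableSet D := hA.diff hEstarm
    have hDeq : condIndicator m1 μ D =ᵐ[μ]
        condIndicator m1 μ A - condIndicator m1 μ Estar := cI_diff hm hA hEstarm hEstarA
    have hDpos : ∀ᵐ ω ∂μ, ω ∈ S → 0 < condIndicator m1 μ D ω := by
      filter_upwards [hDeq, hvA] with ω h1 h2 hωS
      have h3 : condIndicator m1 μ Estar ω < v ω := hωS
      have : condIndicator m1 μ D ω
          = condIndicator m1 μ A ω - condIndicator m1 μ Estar ω := h1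
      linarith
    obtain ⟨P, hPmeas, hPsub, hPae⟩ := small_pieces hm hat hDm
    set T : ℕ → Set Ω := fun n =>
      S ∩ {ω | condIndicator m1 μ (P n) ω ≤ v ω - condIndicator m1 μ Estar ω} with hT
    have hSm1 : MeasurableSet[m1] S :=
      measurableSet_lt (cI_meas _).measurable hv
    have hTm1 : ∀ n, MeasurableSet[m1] (T n) := by
      intro n
      exact hSm1.inter (measurableSet_le (cI_meas _).measurable
        (hv.sub (cI_meas _).measurable))
    have hScover : ∀ᵐ ω ∂μ, ω ∈ S → ω ∈ ⋃ n, T n := by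
      filter_upwards [hDpos, hPae, cI_le_one hm D hDm] with ω h1 h2 h3 hωS
      have hpos := h1 hωS
      have h2' := h2 hpos
      have hε : 0 < v ω - condIndicator m1 μ Estar ω := by
        have : condIndicator m1 μ Estar ω < v ω := hωS
        linarith
      obtain ⟨n, hn⟩ := exists_pow_lt_of_lt_one hε (show (1/2 : ℝ) < 1 by norm_num)
      refine Set.mem_iUnion.2 ⟨n, hωS, ?_⟩
      have hd1 : condIndicator m1 μ (P n) ω ≤ (1/2:ℝ)^n * condIndicator m1 μ D ω := (h2' n).2
      have hd2 : condIndicator m1 μ D ω ≤ 1 := h3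
      have : (1/2:ℝ)^n * condIndicator m1 μ D ω ≤ (1/2:ℝ)^n := by
        nlinarith [pow_nonneg (by norm_num : (0:ℝ) ≤ 1/2) n]
      show condIndicator m1 μ (P n) ω ≤ v ω - condIndicator m1 μ Estar ω
      linarith
    have hcov : μ S ≤ μ (⋃ n, T n) := by
      have : S ≤ᵐ[μ] ⋃ n, T n := hScover
      exact measure_mono_ae this
    have hTex : ∃ n, μ (T n) ≠ 0 := by
      by_contra h
      push_neg at h
      have : μ (⋃ n, T n) = 0 := measure_iUnion_null h
      rw [this] at hcov
      exact hS0 (le_antisymm hcov zero_le)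
    obtain ⟨n, hTn⟩ := hTex
    set F := Estar ∪ (P n ∩ T n) with hF
    have hPnD : P n ⊆ D := hPsub n
    have hdisj : Disjoint Estar (P n ∩ T n) := by
      refine Set.disjoint_left.2 ?_
      intro ω hω1 hω2
      exact (hPnD hω2.1).2 hω1
    have hFm : MeasurableSet F := hEstarm.union ((hPmeas n).inter (hm _ (hTm1 n)))
    have hF1 : condIndicator m1 μ F =ᵐ[μ]
        condIndicator m1 μ Estar + condIndicator m1 μ (P n ∩ T n) :=
      cI_union hm hEstarm ((hPmeas n).inter (hm _ (hTm1 n))) hdisj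
    have hF2 : condIndicator m1 μ (P n ∩ T n) =ᵐ[μ]
        (T n).indicator (condIndicator m1 μ (P n)) := cI_inter_m1 hm (hPmeas n) (hTm1 n)
    have hFle : condIndicator m1 μ F ≤ᵐ[μ] v := by
      filter_upwards [hF1, hF2, hEstarle] with ω h1 h2 h3
      rw [h1]
      simp only [Pi.add_apply]
      rw [h2]
      by_cases hωT : ω ∈ T n
      · rw [Set.indicator_of_mem hωT]
        have := hωT.2
        simp only [Set.mem_setOf_eq] at this
        linarith
      · rw [Set.indicator_of_notMem hωT]
        linarith
    have hF𝒞 : F ∈ 𝒞 := ⟨hFm, Set.union_subset hEstarA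
      (fun ω hω => (hPnD hω.1).1), hFle⟩
    have hγpos : 0 < (μ (P n ∩ T n)).toReal := by
      rw [ENNReal.toReal_pos_iff]
      refine ⟨?_, lt_of_le_of_lt (measure_mono (Set.subset_univ _)) (by simp)⟩
      rw [pos_iff_ne_zero]
      intro h0
      have hz := cI_null (m1 := m1) hm h0
      have : ∀ᵐ ω ∂μ, ω ∉ T n := by
        filter_upwards [hz, hF2, hDpos, hPae] with ω h1 h2 h3 h4 hωT
        have hωS : ω ∈ S := hωT.1
        have hpos := h4 (h3 hωS)
        have : (T n).indicator (condIndicator m1 μ (P n)) ω = 0 := by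
          rw [← h2]; exact h1
        rw [Set.indicator_of_mem hωT] at this
        linarith [(hpos n).1]
      exact hTn (measure_eq_zero_iff_ae_notMem.2 this)
    set γ := (μ (P n ∩ T n)).toReal with hγ
    have hδk : ∀ k, γ ≤ δ (E k) := by
      intro k
      have hmem : (μ (F \ E k)).toReal ∈ R (E k) :=
        ⟨F, ⟨hF𝒞, (hEsubstar k).trans Set.subset_union_left⟩, rfl⟩
      have hle : γ ≤ (μ (F \ E k)).toReal := by
        refine ENNReal.toReal_mono (measure_ne_top μ _) (measure_mono ?_)
        intro ω hω
        refine ⟨Set.mem_union_right _ hω, fun hωE => ?_⟩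
        exact Set.disjoint_left.1 hdisj (hEsubstar k hωE) hω
      exact le_csSup_of_le (hbddR (E k)) hmem hle
    have hstep : ∀ k, γ / 2 ≤ (μ (E (k+1) \ E k)).toReal := by
      intro k
      have h1 := hn2 (Q k)
      have h2 : δ (E k) / 2 ≤ (μ ((Q (k+1)).1 \ E k)).toReal := by
        rw [hQsucc k]; exact h1
      have := hδk k
      calc γ / 2 ≤ δ (E k) / 2 := by linarith
        _ ≤ (μ (E (k+1) \ E k)).toReal := h2
    have hgrow : ∀ k : ℕ, (k : ℝ) * (γ / 2) ≤ (μ (E k)).toReal := by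
      intro k
      induction k with
      | zero => simp
      | succ j ih =>
        have hsplit : μ (E (j+1)) = μ (E j) + μ (E (j+1) \ E j) := by
          rw [← measure_union (disjoint_sdiff_right) ((hEmeas (j+1)).diff (hEmeas j))]
          rw [Set.union_diff_cancel (hmonoE (Nat.le_succ j))]
        have htr : (μ (E (j+1))).toReal
            = (μ (E j)).toReal + (μ (E (j+1) \ E j)).toReal := by
          rw [hsplit, ENNReal.toReal_add (measure_ne_top μ _) (measure_ne_top μ _)]
        have := hstep j
        push_cast
        rw [htr]
        linarith
    obtain ⟨k, hk⟩ := exists_nat_gt (2 / γ)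
    have h1 : (μ (E k)).toReal ≤ 1 := by
      calc (μ (E k)).toReal ≤ (μ (Set.univ : Set Ω)).toReal :=
            ENNReal.toReal_mono (measure_ne_top μ _) (measure_mono (Set.subset_univ _))
        _ = 1 := by simp
    have h2 := hgrow k
    have h3 : (2 / γ) * (γ / 2) < (k : ℝ) * (γ / 2) := by
      apply mul_lt_mul_of_pos_right hk
      linarith
    rw [div_mul_div_comm] at h3
    have h4 : (2 * γ) / (γ * 2) = 1 := by
      rw [mul_comm γ 2]
      exact div_self (by positivity)
    rw [h4] at h3
    linarith

end ExactSplit2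

section Gfun

/-- Largest odd integer `k` with `4^k ≤ x` (junk for `x ≤ 0`). -/
noncomputable def oddlog (x : ℝ) : ℤ :=
  if Even (Int.log 4 x) then Int.log 4 x - 1 else Int.log 4 x

/-- A monotone function oscillating between `x/2` and `2x`. -/
noncomputable def Gfun (x : ℝ) : ℝ :=
  if 0 < x then 2 * (4:ℝ)^(oddlog x)
  else if x < 0 then -(2 * (4:ℝ)^(oddlog (-x)))
  else 0

lemma oddlog_mono {x y : ℝ} (hx : 0 < x) (hxy : x ≤ y) : oddlog x ≤ oddlog y := by
  have h := Int.log_mono_right (b := 4) hx hxy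
  unfold oddlog
  rcases le_or_gt (Int.log 4 x + 1) (Int.log 4 y) with hlt | hle
  · split <;> split <;> omega
  · have : Int.log 4 x = Int.log 4 y := by omega
    rw [this]

lemma Gfun_pos {x : ℝ} (hx : 0 < x) : 0 < Gfun x := by
  unfold Gfun
  rw [if_pos hx]
  positivity

lemma Gfun_neg {x : ℝ} (hx : x < 0) : Gfun x < 0 := by
  unfold Gfun
  rw [if_neg (by linarith), if_pos hx]
  have : (0:ℝ) < 2 * (4:ℝ)^(oddlog (-x)) := by positivity
  linarith

lemma Gfun_zero : Gfun 0 = 0 := by unfold Gfun; norm_num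

lemma Gfun_odd (x : ℝ) : Gfun (-x) = - Gfun x := by
  rcases lt_trichotomy x 0 with h | h | h
  · have h1 : (0:ℝ) < -x := by linarith
    unfold Gfun
    rw [if_pos h1, if_neg (by linarith : ¬ (0:ℝ) < x), if_pos h, neg_neg]
  · subst h; simp [Gfun]
  · have h1 : ¬ (0:ℝ) < -x := by linarith
    have h2 : -x < 0 := by linarith
    unfold Gfun
    rw [if_pos h, if_neg h1, if_pos h2, neg_neg]

lemma Gfun_monotone : Monotone Gfun := by
  intro x y hxy
  rcases lt_trichotomy x 0 with hx | hx | hx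
  · rcases lt_trichotomy y 0 with hy | hy | hy
    · -- both negative
      unfold Gfun
      rw [if_neg (by linarith), if_pos hx, if_neg (by linarith), if_pos hy]
      have h := oddlog_mono (x := -y) (y := -x) (by linarith) (by linarith)
      have := zpow_le_zpow_right₀ (by norm_num : (1:ℝ) ≤ 4) h
      nlinarith
    · rw [hy, Gfun_zero]; exact le_of_lt (Gfun_neg hx)
    · exact le_of_lt ((Gfun_neg hx).trans (Gfun_pos hy))
  · subst hx
    rcases eq_or_lt_of_le hxy with h | h
    · rw [← h]
    · rw [Gfun_zero]
      exact le_of_lt (Gfun_pos h)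
  · have hy : 0 < y := lt_of_lt_of_le hx hxy
    unfold Gfun
    rw [if_pos hx, if_pos hy]
    have h := oddlog_mono hx hxy
    have := zpow_le_zpow_right₀ (by norm_num : (1:ℝ) ≤ 4) h
    linarith

lemma oddlog_pow (j : ℕ) : oddlog ((4:ℝ)^j) = if Even (j:ℤ) then (j:ℤ) - 1 else j := by
  unfold oddlog
  have h4 : ((4:ℝ)^j) = ((4:ℕ):ℝ)^(j:ℤ) := by
    rw [zpow_natCast]; norm_num
  rw [h4, Int.log_zpow (by norm_num : 1 < 4)]

lemma Gfun_pow_odd (k : ℕ) : Gfun ((4:ℝ)^(2*k+1)) = 2 * (4:ℝ)^(2*k+1) := by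
  have hpos : (0:ℝ) < (4:ℝ)^(2*k+1) := by positivity
  unfold Gfun
  rw [if_pos hpos, oddlog_pow]
  rw [if_neg (by rw [Int.even_iff]; push_cast; omega)]
  rw [zpow_natCast]

lemma Gfun_pow_even (k : ℕ) : Gfun ((4:ℝ)^(2*k)) = (4:ℝ)^(2*k) / 2 := by
  have hpos : (0:ℝ) < (4:ℝ)^(2*k) := by positivity
  unfold Gfun
  rw [if_pos hpos, oddlog_pow]
  rw [if_pos (by rw [Int.even_iff]; push_cast; omega)]
  have : ((2*k : ℕ) : ℤ) - 1 = (2*(k:ℤ) - 1) := by push_cast; ring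
  rw [this]
  have h1 : (4:ℝ)^(2*(k:ℤ) - 1) = (4:ℝ)^(2*(k:ℤ)) / 4 := by
    rw [zpow_sub₀ (by norm_num : (4:ℝ) ≠ 0)]
    norm_num
  rw [h1]
  have h2 : (4:ℝ)^(2*(k:ℤ)) = (4:ℝ)^(2*k : ℕ) := by
    rw [← zpow_natCast]
    norm_num
  rw [h2]
  ring

lemma Gfun_measurable : Measurable Gfun := Gfun_monotone.measurable

end Gfun

section MainAux

variable {Ω : Type*} {m1 : MeasurableSpace Ω} [m2 : MeasurableSpace Ω]
  {μ : Measure Ω} [IsProbabilityMeasure μ]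

lemma condexp_const_mul (c : ℝ) (F : Ω → ℝ) :
    μ[fun ω => c * F ω|m1] =ᵐ[μ] fun ω => c * (μ[F|m1]) ω := by
  have h := condExp_smul (μ := μ) (m := m1) c F
  filter_upwards [h] with ω hω
  have : (c • F) = fun ω => c * F ω := by funext x; simp [smul_eq_mul]
  rw [← this]
  rw [hω]
  simp [smul_eq_mul]

lemma max_sub_max_neg (a : ℝ) : max a 0 - max (-a) 0 = a := by
  rcases le_total a 0 with h | h
  · rw [max_eq_right h, max_eq_left (by linarith)]; ring
  · rw [max_eq_left h, max_eq_right (by linarith)]; ring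

lemma max_add_max_neg (a : ℝ) : max a 0 + max (-a) 0 = |a| := by
  rcases le_total a 0 with h | h
  · rw [max_eq_right h, max_eq_left (by linarith), abs_of_nonpos h]; ring
  · rw [max_eq_left h, max_eq_right (by linarith), abs_of_nonneg h]; ring

lemma two_mul_le_16_pow : ∀ m : ℕ, (2 * m : ℝ) ≤ 16 ^ m := by
  intro m
  induction m with
  | zero => norm_num
  | succ j ih =>
    have h1 : (1:ℝ) ≤ 16 ^ j := one_le_pow₀ (by norm_num)
    push_cast at ih ⊢
    calc (2:ℝ) * (j + 1) = 2 * j + 2 := by ring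
      _ ≤ 16^j + 2 * 16^j := by linarith
      _ ≤ 16 * 16^j := by linarith
      _ = 16^(j+1) := by ring

end MainAux

theorem commonotone_condexp_representation {Ω : Type*} (m1 : MeasurableSpace Ω)
    [m2 : MeasurableSpace Ω] (hm : m1 ≤ m2) (μ : Measure Ω) [IsProbabilityMeasure μ]
    (hatomless : CondAtomless m1 μ)
    (f g : Ω → ℝ) (hfm : Measurable[m1] f) (hgm : Measurable[m1] g)
    (hfi : Integrable f μ) (hgi : Integrable g μ) :
    ∃ ξ η : Ω → ℝ, Measurable ξ ∧ Measurable η ∧ Integrable ξ μ ∧ Integrable η μ ∧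
      Commonotone μ ξ η ∧ μ[ξ | m1] =ᵐ[μ] f ∧ μ[η | m1] =ᵐ[μ] g := by
  classical
  set A : Ω → ℝ := fun ω => (2 * g ω - f ω) / 3 with hAdef
  set B : Ω → ℝ := fun ω => (4 * f ω - 2 * g ω) / 3 with hBdef
  have hAm : Measurable[m1] A := ((hgm.const_mul 2).sub hfm).div_const 3
  have hBm : Measurable[m1] B := ((hfm.const_mul 4).sub (hgm.const_mul 2)).div_const 3
  have hAi : Integrable A μ := ((hgi.const_mul 2).sub hfi).div_const 3
  have hBi : Integrable B μ := ((hfi.const_mul 4).sub (hgi.const_mul 2)).div_const 3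
  set n : Ω → ℕ := fun ω => ⌈|A ω| + |B ω|⌉₊ + 1 with hndef
  have habsm : Measurable[m1] (fun ω => |A ω| + |B ω|) := (measurable_abs.comp hAm).add (measurable_abs.comp hBm)
  have hnm1 : Measurable[m1] n :=
    (measurable_from_top (f := fun j : ℕ => j + 1)).comp
      (Nat.measurable_ceil.comp habsm)
  set p : Ω → ℝ := fun ω => (4:ℝ)^(2 * n ω + 1) with hpdef
  set q : Ω → ℝ := fun ω => (4:ℝ)^(2 * n ω) with hqdef
  have hpm1 : Measurable[m1] p :=
    (measurable_from_top (f := fun j : ℕ => (4:ℝ)^(2*j+1))).comp hnm1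
  have hqm1 : Measurable[m1] q :=
    (measurable_from_top (f := fun j : ℕ => (4:ℝ)^(2*j))).comp hnm1
  have hp_pos : ∀ ω, 0 < p ω := fun ω => by positivity
  have hq_pos : ∀ ω, 0 < q ω := fun ω => by positivity
  have hqp : ∀ ω, q ω ≤ p ω := fun ω =>
    pow_le_pow_right₀ (by norm_num) (by omega)
  have habs_le : ∀ ω, |A ω| + |B ω| ≤ q ω / 2 := by
    intro ω
    have h1 : |A ω| + |B ω| ≤ (⌈|A ω| + |B ω|⌉₊ : ℝ) := Nat.le_ceil _
    have h2 := two_mul_le_16_pow (n ω)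
    have h3 : q ω = (16:ℝ) ^ (n ω) := by
      show (4:ℝ)^(2 * n ω) = (16:ℝ)^(n ω)
      rw [pow_mul]; norm_num
    have h4 : (⌈|A ω| + |B ω|⌉₊ : ℝ) + 1 = (n ω : ℝ) := by
      show _ = ((⌈|A ω| + |B ω|⌉₊ + 1 : ℕ) : ℝ)
      push_cast; ring
    rw [h3]
    nlinarith [(by positivity : (0:ℝ) ≤ (⌈|A ω| + |B ω|⌉₊ : ℝ))]
  set w1 : Ω → ℝ := fun ω => max (A ω) 0 / p ω with hw1def
  set w2 : Ω → ℝ := fun ω => max (B ω) 0 / q ω with hw2def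
  set w3 : Ω → ℝ := fun ω => max (-A ω) 0 / p ω with hw3def
  set w4 : Ω → ℝ := fun ω => max (-B ω) 0 / q ω with hw4def
  have hw1m : Measurable[m1] w1 := (hAm.max measurable_const).div hpm1
  have hw2m : Measurable[m1] w2 := (hBm.max measurable_const).div hqm1
  have hw3m : Measurable[m1] w3 := (hAm.neg.max measurable_const).div hpm1
  have hw4m : Measurable[m1] w4 := (hBm.neg.max measurable_const).div hqm1
  have hw1_0 : ∀ ω, 0 ≤ w1 ω := fun ω => div_nonneg (le_max_right _ _) (hp_pos ω).le
  have hw2_0 : ∀ ω, 0 ≤ w2 ω := fun ω => div_nonneg (le_max_right _ _) (hq_pos ω).le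
  have hw3_0 : ∀ ω, 0 ≤ w3 ω := fun ω => div_nonneg (le_max_right _ _) (hp_pos ω).le
  have hw4_0 : ∀ ω, 0 ≤ w4 ω := fun ω => div_nonneg (le_max_right _ _) (hq_pos ω).le
  have hsum : ∀ ω, w1 ω + w2 ω + w3 ω + w4 ω ≤ 1 := by
    intro ω
    have e1 : w1 ω + w3 ω = |A ω| / p ω := by
      show max (A ω) 0 / p ω + max (-A ω) 0 / p ω = _
      rw [← add_div, max_add_max_neg]
    have e2 : w2 ω + w4 ω = |B ω| / q ω := by
      show max (B ω) 0 / q ω + max (-B ω) 0 / q ω = _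
      rw [← add_div, max_add_max_neg]
    have e3 : |A ω| / p ω ≤ |A ω| / q ω :=
      div_le_div_of_nonneg_left (abs_nonneg _) (hq_pos ω) (hqp ω)
    have e4 : |A ω| / q ω + |B ω| / q ω ≤ 1 := by
      rw [← add_div, div_le_one (hq_pos ω)]
      have := habs_le ω
      have := hq_pos ω
      linarith
    linarith
  -- construct the four sets
  obtain ⟨C1, hC1m, hC1sub, hC1⟩ := exact_split hm hatomless MeasurableSet.univ hw1m
    (Filter.Eventually.of_forall hw1_0) (by
      filter_upwards [cI_univ (μ := μ) hm] with ω hω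
      simp only [Pi.one_apply] at hω
      rw [hω]
      have := hsum ω
      have := hw2_0 ω; have := hw3_0 ω; have := hw4_0 ω
      linarith)
  have hA2eq : condIndicator m1 μ (Set.univ \ C1) =ᵐ[μ] fun ω => 1 - w1 ω := by
    filter_upwards [cI_diff hm MeasurableSet.univ hC1m (Set.subset_univ C1),
      cI_univ (μ := μ) hm, hC1] with ω h1 h2 h3
    rw [h1]
    simp only [Pi.sub_apply]
    rw [h2, h3]
    rfl
  obtain ⟨C2, hC2m, hC2sub, hC2⟩ := exact_split hm hatomless
    (MeasurableSet.univ.diff hC1m) hw2m (Filter.Eventually.of_forall hw2_0) (by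
      filter_upwards [hA2eq] with ω hω
      rw [hω]
      have := hsum ω
      have := hw1_0 ω; have := hw3_0 ω; have := hw4_0 ω
      linarith)
  have hA3eq : condIndicator m1 μ ((Set.univ \ C1) \ C2) =ᵐ[μ]
      fun ω => 1 - w1 ω - w2 ω := by
    filter_upwards [cI_diff hm (MeasurableSet.univ.diff hC1m) hC2m hC2sub,
      hA2eq, hC2] with ω h1 h2 h3
    rw [h1]
    simp only [Pi.sub_apply]
    rw [h2, h3]
  obtain ⟨C3, hC3m, hC3sub, hC3⟩ := exact_split hm hatomless
    ((MeasurableSet.univ.diff hC1m).diff hC2m) hw3m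
    (Filter.Eventually.of_forall hw3_0) (by
      filter_upwards [hA3eq] with ω hω
      rw [hω]
      have := hsum ω
      have := hw1_0 ω; have := hw2_0 ω; have := hw4_0 ω
      linarith)
  have hA4eq : condIndicator m1 μ (((Set.univ \ C1) \ C2) \ C3) =ᵐ[μ]
      fun ω => 1 - w1 ω - w2 ω - w3 ω := by
    filter_upwards [cI_diff hm ((MeasurableSet.univ.diff hC1m).diff hC2m) hC3m hC3sub,
      hA3eq, hC3] with ω h1 h2 h3
    rw [h1]
    simp only [Pi.sub_apply]
    rw [h2, h3]
  obtain ⟨C4, hC4m, hC4sub, hC4⟩ := exact_split hm hatomless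
    (((MeasurableSet.univ.diff hC1m).diff hC2m).diff hC3m) hw4m
    (Filter.Eventually.of_forall hw4_0) (by
      filter_upwards [hA4eq] with ω hω
      rw [hω]
      have := hsum ω
      have := hw1_0 ω; have := hw2_0 ω; have := hw3_0 ω
      linarith)
  -- levels
  set Lev : ℕ → Set Ω := fun k => {ω | n ω = k} with hLevdef
  have hLevm1 : ∀ k, MeasurableSet[m1] (Lev k) := fun k => hnm1 (measurableSet_singleton k)
  have hLevdisj : Pairwise (Function.onFun Disjoint Lev) := by
    intro i j hij
    refine Set.disjoint_left.2 ?_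
    intro ω h1 h2
    exact hij ((Eq.symm h1).trans h2)
  have hLevcover : (⋃ k, Lev k) = Set.univ := by
    ext ω; simp only [Set.mem_iUnion, Set.mem_univ, iff_true]
    exact ⟨n ω, rfl⟩
  -- the main assembly lemma
  have hmain : ∀ (s t : ℝ), 0 < s → 0 < t → ∀ Z : Ω → ℝ, Measurable Z →
      (∀ ω, Z ω = if ω ∈ C1 then s * p ω else if ω ∈ C2 then t * q ω
        else if ω ∈ C3 then -(s * p ω) else if ω ∈ C4 then -(t * q ω) else 0) →
      Integrable Z μ ∧ μ[Z|m1] =ᵐ[μ] fun ω => s * A ω + t * B ω := by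
    intro s t hs ht Z hZmeas hZ
    set pk : ℕ → ℝ := fun k => (4:ℝ)^(2*k+1) with hpkdef
    set qk : ℕ → ℝ := fun k => (4:ℝ)^(2*k) with hqkdef
    have hd2 : ∀ ω, ω ∈ C2 → ω ∉ C1 := fun ω h => (hC2sub h).2
    have hd3 : ∀ ω, ω ∈ C3 → ω ∉ C1 ∧ ω ∉ C2 := fun ω h => ⟨(hC3sub h).1.2, (hC3sub h).2⟩
    have hd4 : ∀ ω, ω ∈ C4 → ω ∉ C1 ∧ ω ∉ C2 ∧ ω ∉ C3 :=
      fun ω h => ⟨(hC4sub h).1.1.2, (hC4sub h).1.2, (hC4sub h).2⟩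
    have hμid : ∀ (C : Set Ω), MeasurableSet C → ∀ (w : Ω → ℝ),
        condIndicator m1 μ C =ᵐ[μ] w →
        ∀ k, (μ (C ∩ Lev k)).toReal = ∫ ω in Lev k, w ω ∂μ := by
      intro C hC w hw k
      rw [← cI_setIntegral (μ := μ) hm hC (hLevm1 k)]
      exact integral_congr_ae (ae_restrict_of_ae hw)
    have hD1m : ∀ k, MeasurableSet (C1 ∩ Lev k) := fun k => hC1m.inter (hm _ (hLevm1 k))
    have hD2m : ∀ k, MeasurableSet (C2 ∩ Lev k) := fun k => hC2m.inter (hm _ (hLevm1 k))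
    have hD3m : ∀ k, MeasurableSet (C3 ∩ Lev k) := fun k => hC3m.inter (hm _ (hLevm1 k))
    have hD4m : ∀ k, MeasurableSet (C4 ∩ Lev k) := fun k => hC4m.inter (hm _ (hLevm1 k))
    have hZlev : ∀ k, (Lev k).indicator Z = fun ω =>
        (s * pk k) * (C1 ∩ Lev k).indicator (fun _ => (1:ℝ)) ω
        + (t * qk k) * (C2 ∩ Lev k).indicator (fun _ => (1:ℝ)) ω
        - (s * pk k) * (C3 ∩ Lev k).indicator (fun _ => (1:ℝ)) ω
        - (t * qk k) * (C4 ∩ Lev k).indicator (fun _ => (1:ℝ)) ω := by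
      intro k
      funext ω
      by_cases hL : ω ∈ Lev k
      · have hnk : n ω = k := hL
        have hpω : p ω = pk k := by rw [show p ω = pk (n ω) from rfl, hnk]
        have hqω : q ω = qk k := by rw [show q ω = qk (n ω) from rfl, hnk]
        rw [Set.indicator_of_mem hL, hZ ω]
        by_cases h1 : ω ∈ C1
        · rw [if_pos h1, Set.indicator_of_mem (Set.mem_inter h1 hL),
            Set.indicator_of_notMem (fun hh : ω ∈ C2 ∩ Lev k => hd2 ω hh.1 h1),
            Set.indicator_of_notMem (fun hh : ω ∈ C3 ∩ Lev k => (hd3 ω hh.1).1 h1),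
            Set.indicator_of_notMem (fun hh : ω ∈ C4 ∩ Lev k => (hd4 ω hh.1).1 h1), hpω]
          ring
        · rw [if_neg h1]
          by_cases h2 : ω ∈ C2
          · rw [if_pos h2, Set.indicator_of_notMem (fun hh : ω ∈ C1 ∩ Lev k => h1 hh.1),
              Set.indicator_of_mem (Set.mem_inter h2 hL),
              Set.indicator_of_notMem (fun hh : ω ∈ C3 ∩ Lev k => (hd3 ω hh.1).2 h2),
              Set.indicator_of_notMem (fun hh : ω ∈ C4 ∩ Lev k => (hd4 ω hh.1).2.1 h2), hqω]
            ring
          · rw [if_neg h2]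
            by_cases h3 : ω ∈ C3
            · rw [if_pos h3, Set.indicator_of_notMem (fun hh : ω ∈ C1 ∩ Lev k => h1 hh.1),
                Set.indicator_of_notMem (fun hh : ω ∈ C2 ∩ Lev k => h2 hh.1),
                Set.indicator_of_mem (Set.mem_inter h3 hL),
                Set.indicator_of_notMem (fun hh : ω ∈ C4 ∩ Lev k => (hd4 ω hh.1).2.2 h3), hpω]
              ring
            · rw [if_neg h3]
              by_cases h4 : ω ∈ C4
              · rw [if_pos h4, Set.indicator_of_notMem (fun hh : ω ∈ C1 ∩ Lev k => h1 hh.1),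
                  Set.indicator_of_notMem (fun hh : ω ∈ C2 ∩ Lev k => h2 hh.1),
                  Set.indicator_of_notMem (fun hh : ω ∈ C3 ∩ Lev k => h3 hh.1),
                  Set.indicator_of_mem (Set.mem_inter h4 hL), hqω]
                ring
              · rw [if_neg h4, Set.indicator_of_notMem (fun hh : ω ∈ C1 ∩ Lev k => h1 hh.1),
                  Set.indicator_of_notMem (fun hh : ω ∈ C2 ∩ Lev k => h2 hh.1),
                  Set.indicator_of_notMem (fun hh : ω ∈ C3 ∩ Lev k => h3 hh.1),
                  Set.indicator_of_notMem (fun hh : ω ∈ C4 ∩ Lev k => h4 hh.1)]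
                ring
      · rw [Set.indicator_of_notMem hL,
          Set.indicator_of_notMem (fun hh : ω ∈ C1 ∩ Lev k => hL hh.2),
          Set.indicator_of_notMem (fun hh : ω ∈ C2 ∩ Lev k => hL hh.2),
          Set.indicator_of_notMem (fun hh : ω ∈ C3 ∩ Lev k => hL hh.2),
          Set.indicator_of_notMem (fun hh : ω ∈ C4 ∩ Lev k => hL hh.2)]
        ring
    -- weights are bounded hence integrable
    have hwle : ∀ ω, w1 ω ≤ 1 ∧ w2 ω ≤ 1 ∧ w3 ω ≤ 1 ∧ w4 ω ≤ 1 := by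
      intro ω
      have := hsum ω
      have h1 := hw1_0 ω; have h2 := hw2_0 ω; have h3 := hw3_0 ω; have h4 := hw4_0 ω
      exact ⟨by linarith, by linarith, by linarith, by linarith⟩
    -- the dominating function
    have hHint : Integrable (fun ω => s * |A ω| + t * |B ω|) μ :=
      (hAi.abs.const_mul s).add (hBi.abs.const_mul t)
    have hIlev : ∀ k, ∫⁻ ω in Lev k, ‖Z ω‖₊ ∂μ
        ≤ ∫⁻ ω in Lev k, ENNReal.ofReal (s * |A ω| + t * |B ω|) ∂μ := by
      intro k
      have hpkpos : (0:ℝ) < pk k := by positivity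
      have hqkpos : (0:ℝ) < qk k := by positivity
      set Φ : Ω → ℝ := fun ω =>
        (s * pk k) * (C1 ∩ Lev k).indicator (fun _ => (1:ℝ)) ω
        + (t * qk k) * (C2 ∩ Lev k).indicator (fun _ => (1:ℝ)) ω
        + (s * pk k) * (C3 ∩ Lev k).indicator (fun _ => (1:ℝ)) ω
        + (t * qk k) * (C4 ∩ Lev k).indicator (fun _ => (1:ℝ)) ω with hΦdef
      have hind_nn : ∀ (D : Set Ω) (ω : Ω), (0:ℝ) ≤ D.indicator (fun _ => (1:ℝ)) ω :=
        fun D ω => Set.indicator_nonneg (fun _ _ => zero_le_one) ω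
      have hΦnn : ∀ ω, 0 ≤ Φ ω := by
        intro ω
        have i1 := hind_nn (C1 ∩ Lev k) ω; have i2 := hind_nn (C2 ∩ Lev k) ω
        have i3 := hind_nn (C3 ∩ Lev k) ω; have i4 := hind_nn (C4 ∩ Lev k) ω
        have := mul_nonneg (mul_nonneg hs.le hpkpos.le) i1
        have := mul_nonneg (mul_nonneg ht.le hqkpos.le) i2
        have := mul_nonneg (mul_nonneg hs.le hpkpos.le) i3
        have := mul_nonneg (mul_nonneg ht.le hqkpos.le) i4
        show (0:ℝ) ≤ _ + _ + _ + _
        linarith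
      have hΦint : Integrable Φ μ :=
        ((((integrable_ind _ (hD1m k)).const_mul _).add
          ((integrable_ind _ (hD2m k)).const_mul _)).add
          ((integrable_ind _ (hD3m k)).const_mul _)).add
          ((integrable_ind _ (hD4m k)).const_mul _)
      have hb : ∀ ω ∈ Lev k, (‖Z ω‖₊ : ENNReal) ≤ ENNReal.ofReal (Φ ω) := by
        intro ω hL
        rw [← enorm_eq_nnnorm, Real.enorm_eq_ofReal_abs]
        refine ENNReal.ofReal_le_ofReal ?_
        have hZω : Z ω = (s * pk k) * (C1 ∩ Lev k).indicator (fun _ => (1:ℝ)) ω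
            + (t * qk k) * (C2 ∩ Lev k).indicator (fun _ => (1:ℝ)) ω
            - (s * pk k) * (C3 ∩ Lev k).indicator (fun _ => (1:ℝ)) ω
            - (t * qk k) * (C4 ∩ Lev k).indicator (fun _ => (1:ℝ)) ω := by
          have := congrFun (hZlev k) ω
          rwa [Set.indicator_of_mem hL] at this
        have i1 := hind_nn (C1 ∩ Lev k) ω; have i2 := hind_nn (C2 ∩ Lev k) ω
        have i3 := hind_nn (C3 ∩ Lev k) ω; have i4 := hind_nn (C4 ∩ Lev k) ω
        have n1 := mul_nonneg (mul_nonneg hs.le hpkpos.le) i1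
        have n2 := mul_nonneg (mul_nonneg ht.le hqkpos.le) i2
        have n3 := mul_nonneg (mul_nonneg hs.le hpkpos.le) i3
        have n4 := mul_nonneg (mul_nonneg ht.le hqkpos.le) i4
        rw [hZω, abs_le]
        constructor
        · show -((s * pk k) * _ + (t * qk k) * _ + (s * pk k) * _ + (t * qk k) * _) ≤ _
          linarith
        · show _ ≤ (s * pk k) * _ + (t * qk k) * _ + (s * pk k) * _ + (t * qk k) * _
          linarith
      have step1 : ∫⁻ ω in Lev k, ‖Z ω‖₊ ∂μ ≤ ∫⁻ ω in Lev k, ENNReal.ofReal (Φ ω) ∂μ := by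
        refine lintegral_mono_ae ?_
        rw [ae_restrict_iff' (hm _ (hLevm1 k))]
        exact Filter.Eventually.of_forall hb
      have step2 : ∫⁻ ω in Lev k, ENNReal.ofReal (Φ ω) ∂μ
          = ENNReal.ofReal (∫ ω in Lev k, Φ ω ∂μ) :=
        (ofReal_integral_eq_lintegral_ofReal hΦint.restrict
          (Filter.Eventually.of_forall hΦnn)).symm
      have hindint : ∀ (D : Set Ω), MeasurableSet D →
          ∫ ω in Lev k, D.indicator (fun _ => (1:ℝ)) ω ∂μ = (μ (D ∩ Lev k)).toReal := by
        intro D hD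
        rw [integral_indicator hD]
        rw [Measure.restrict_restrict hD]
        simp [Measure.real]
      have hwint : ∀ (w : Ω → ℝ), Measurable[m1] w → (∀ ω, 0 ≤ w ω) → (∀ ω, w ω ≤ 1) →
          Integrable w μ := by
        intro w hwm h0 h1
        refine Integrable.mono' (integrable_const (1:ℝ))
          ((hwm.mono hm le_rfl)).aestronglyMeasurable ?_
        refine Filter.Eventually.of_forall (fun ω => ?_)
        rw [Real.norm_eq_abs, abs_of_nonneg (h0 ω)]
        exact h1 ω
      have hw1i : Integrable w1 μ := hwint w1 hw1m hw1_0 (fun ω => (hwle ω).1)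
      have hw2i : Integrable w2 μ := hwint w2 hw2m hw2_0 (fun ω => (hwle ω).2.1)
      have hw3i : Integrable w3 μ := hwint w3 hw3m hw3_0 (fun ω => (hwle ω).2.2.1)
      have hw4i : Integrable w4 μ := hwint w4 hw4m hw4_0 (fun ω => (hwle ω).2.2.2)
      have int1 : Integrable (fun ω => (s * pk k) * (C1 ∩ Lev k).indicator (fun _ => (1:ℝ)) ω)
          (μ.restrict (Lev k)) := ((integrable_ind _ (hD1m k)).const_mul _).restrict
      have int2 : Integrable (fun ω => (t * qk k) * (C2 ∩ Lev k).indicator (fun _ => (1:ℝ)) ω)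
          (μ.restrict (Lev k)) := ((integrable_ind _ (hD2m k)).const_mul _).restrict
      have int3 : Integrable (fun ω => (s * pk k) * (C3 ∩ Lev k).indicator (fun _ => (1:ℝ)) ω)
          (μ.restrict (Lev k)) := ((integrable_ind _ (hD3m k)).const_mul _).restrict
      have int4 : Integrable (fun ω => (t * qk k) * (C4 ∩ Lev k).indicator (fun _ => (1:ℝ)) ω)
          (μ.restrict (Lev k)) := ((integrable_ind _ (hD4m k)).const_mul _).restrict
      have jnt1 : Integrable (fun ω => (s * pk k) * w1 ω) (μ.restrict (Lev k)) :=
        (hw1i.const_mul _).restrict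
      have jnt2 : Integrable (fun ω => (t * qk k) * w2 ω) (μ.restrict (Lev k)) :=
        (hw2i.const_mul _).restrict
      have jnt3 : Integrable (fun ω => (s * pk k) * w3 ω) (μ.restrict (Lev k)) :=
        (hw3i.const_mul _).restrict
      have jnt4 : Integrable (fun ω => (t * qk k) * w4 ω) (μ.restrict (Lev k)) :=
        (hw4i.const_mul _).restrict
      have term_eq : ∀ (D : Set Ω), MeasurableSet D → ∀ (c : ℝ) (w : Ω → ℝ),
          condIndicator m1 μ D =ᵐ[μ] w →
          ∫ ω in Lev k, c * (D ∩ Lev k).indicator (fun _ => (1:ℝ)) ω ∂μ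
            = ∫ ω in Lev k, c * w ω ∂μ := by
        intro D hD c w hw
        rw [integral_const_mul, integral_const_mul,
          hindint _ (hD.inter (hm _ (hLevm1 k))), Set.inter_assoc, Set.inter_self,
          hμid D hD w hw k]
      have addL1 : ∫ ω in Lev k, Φ ω ∂μ
          = ∫ ω in Lev k, ((s * pk k) * (C1 ∩ Lev k).indicator (fun _ => (1:ℝ)) ω
              + (t * qk k) * (C2 ∩ Lev k).indicator (fun _ => (1:ℝ)) ω
              + (s * pk k) * (C3 ∩ Lev k).indicator (fun _ => (1:ℝ)) ω) ∂μ
            + ∫ ω in Lev k, (t * qk k) * (C4 ∩ Lev k).indicator (fun _ => (1:ℝ)) ω ∂μ :=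
        integral_add ((int1.add int2).add int3) int4
      have addL2 : ∫ ω in Lev k, ((s * pk k) * (C1 ∩ Lev k).indicator (fun _ => (1:ℝ)) ω
              + (t * qk k) * (C2 ∩ Lev k).indicator (fun _ => (1:ℝ)) ω
              + (s * pk k) * (C3 ∩ Lev k).indicator (fun _ => (1:ℝ)) ω) ∂μ
          = ∫ ω in Lev k, ((s * pk k) * (C1 ∩ Lev k).indicator (fun _ => (1:ℝ)) ω
              + (t * qk k) * (C2 ∩ Lev k).indicator (fun _ => (1:ℝ)) ω) ∂μ
            + ∫ ω in Lev k, (s * pk k) * (C3 ∩ Lev k).indicator (fun _ => (1:ℝ)) ω ∂μ :=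
        integral_add (int1.add int2) int3
      have addL3 : ∫ ω in Lev k, ((s * pk k) * (C1 ∩ Lev k).indicator (fun _ => (1:ℝ)) ω
              + (t * qk k) * (C2 ∩ Lev k).indicator (fun _ => (1:ℝ)) ω) ∂μ
          = ∫ ω in Lev k, (s * pk k) * (C1 ∩ Lev k).indicator (fun _ => (1:ℝ)) ω ∂μ
            + ∫ ω in Lev k, (t * qk k) * (C2 ∩ Lev k).indicator (fun _ => (1:ℝ)) ω ∂μ :=
        integral_add int1 int2
      have addR1 : ∫ ω in Lev k, ((s * pk k) * w1 ω + (t * qk k) * w2 ω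
              + (s * pk k) * w3 ω + (t * qk k) * w4 ω) ∂μ
          = ∫ ω in Lev k, ((s * pk k) * w1 ω + (t * qk k) * w2 ω
              + (s * pk k) * w3 ω) ∂μ + ∫ ω in Lev k, (t * qk k) * w4 ω ∂μ :=
        integral_add ((jnt1.add jnt2).add jnt3) jnt4
      have addR2 : ∫ ω in Lev k, ((s * pk k) * w1 ω + (t * qk k) * w2 ω
              + (s * pk k) * w3 ω) ∂μ
          = ∫ ω in Lev k, ((s * pk k) * w1 ω + (t * qk k) * w2 ω) ∂μ
            + ∫ ω in Lev k, (s * pk k) * w3 ω ∂μ :=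
        integral_add (jnt1.add jnt2) jnt3
      have addR3 : ∫ ω in Lev k, ((s * pk k) * w1 ω + (t * qk k) * w2 ω) ∂μ
          = ∫ ω in Lev k, (s * pk k) * w1 ω ∂μ + ∫ ω in Lev k, (t * qk k) * w2 ω ∂μ :=
        integral_add jnt1 jnt2
      have step3 : ∫ ω in Lev k, Φ ω ∂μ
          = ∫ ω in Lev k, ((s * pk k) * w1 ω + (t * qk k) * w2 ω
            + (s * pk k) * w3 ω + (t * qk k) * w4 ω) ∂μ := by
        rw [addL1, addL2, addL3, addR1, addR2, addR3,
          term_eq C1 hC1m _ w1 hC1, term_eq C2 hC2m _ w2 hC2,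
          term_eq C3 hC3m _ w3 hC3, term_eq C4 hC4m _ w4 hC4]
      have step4 : ∫ ω in Lev k, ((s * pk k) * w1 ω + (t * qk k) * w2 ω
            + (s * pk k) * w3 ω + (t * qk k) * w4 ω) ∂μ
          = ∫ ω in Lev k, (s * |A ω| + t * |B ω|) ∂μ := by
        refine setIntegral_congr_fun (hm _ (hLevm1 k)) ?_
        intro ω hL
        have hnk : n ω = k := hL
        have hpω : p ω = pk k := by rw [show p ω = pk (n ω) from rfl, hnk]
        have hqω : q ω = qk k := by rw [show q ω = qk (n ω) from rfl, hnk]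
        show (s * pk k) * w1 ω + (t * qk k) * w2 ω + (s * pk k) * w3 ω + (t * qk k) * w4 ω = _
        rw [← hpω, ← hqω]
        show s * p ω * (max (A ω) 0 / p ω) + t * q ω * (max (B ω) 0 / q ω)
          + s * p ω * (max (-A ω) 0 / p ω) + t * q ω * (max (-B ω) 0 / q ω) = _
        have hp0 := (hp_pos ω).ne'
        have hq0 := (hq_pos ω).ne'
        have r1 : s * p ω * (max (A ω) 0 / p ω) = s * max (A ω) 0 := by
          rw [mul_assoc, mul_comm (p ω), div_mul_cancel₀ _ hp0]
        have r2 : t * q ω * (max (B ω) 0 / q ω) = t * max (B ω) 0 := by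
          rw [mul_assoc, mul_comm (q ω), div_mul_cancel₀ _ hq0]
        have r3 : s * p ω * (max (-A ω) 0 / p ω) = s * max (-A ω) 0 := by
          rw [mul_assoc, mul_comm (p ω), div_mul_cancel₀ _ hp0]
        have r4 : t * q ω * (max (-B ω) 0 / q ω) = t * max (-B ω) 0 := by
          rw [mul_assoc, mul_comm (q ω), div_mul_cancel₀ _ hq0]
        rw [r1, r2, r3, r4,
          show s * max (A ω) 0 + t * max (B ω) 0 + s * max (-A ω) 0 + t * max (-B ω) 0
            = s * (max (A ω) 0 + max (-A ω) 0) + t * (max (B ω) 0 + max (-B ω) 0) by ring,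
          max_add_max_neg, max_add_max_neg]
      have step5 : ENNReal.ofReal (∫ ω in Lev k, (s * |A ω| + t * |B ω|) ∂μ)
          = ∫⁻ ω in Lev k, ENNReal.ofReal (s * |A ω| + t * |B ω|) ∂μ := by
        refine ofReal_integral_eq_lintegral_ofReal hHint.restrict ?_
        refine Filter.Eventually.of_forall (fun ω => ?_)
        have := abs_nonneg (A ω); have := abs_nonneg (B ω)
        positivity
      calc ∫⁻ ω in Lev k, ‖Z ω‖₊ ∂μ ≤ ∫⁻ ω in Lev k, ENNReal.ofReal (Φ ω) ∂μ := step1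
        _ = ENNReal.ofReal (∫ ω in Lev k, Φ ω ∂μ) := step2
        _ = ENNReal.ofReal (∫ ω in Lev k, (s * |A ω| + t * |B ω|) ∂μ) := by rw [step3, step4]
        _ = ∫⁻ ω in Lev k, ENNReal.ofReal (s * |A ω| + t * |B ω|) ∂μ := step5
    have hsplit : ∀ (F : Ω → ENNReal), Measurable F →
        ∫⁻ ω, F ω ∂μ = ∑' k, ∫⁻ ω in Lev k, F ω ∂μ := by
      intro F hF
      rw [← lintegral_iUnion (fun k => hm _ (hLevm1 k)) hLevdisj F]
      rw [hLevcover, Measure.restrict_univ]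
    have hZint : Integrable Z μ := by
      refine ⟨hZmeas.aestronglyMeasurable, ?_⟩
      show ∫⁻ ω, ‖Z ω‖₊ ∂μ < ⊤
      have hcast : ∫⁻ ω, (‖Z ω‖₊ : ENNReal) ∂μ
          = ∑' k, ∫⁻ ω in Lev k, (‖Z ω‖₊ : ENNReal) ∂μ :=
        hsplit _ hZmeas.nnnorm.coe_nnreal_ennreal
      have hcast2 : ∫⁻ ω, ENNReal.ofReal (s * |A ω| + t * |B ω|) ∂μ
          = ∑' k, ∫⁻ ω in Lev k, ENNReal.ofReal (s * |A ω| + t * |B ω|) ∂μ :=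
        hsplit _ (ENNReal.measurable_ofReal.comp
          (((measurable_abs.comp (hAm.mono hm le_rfl)).const_mul s).add
            ((measurable_abs.comp (hBm.mono hm le_rfl)).const_mul t)))
      rw [hcast]
      calc ∑' k, ∫⁻ ω in Lev k, (‖Z ω‖₊ : ENNReal) ∂μ
          ≤ ∑' k, ∫⁻ ω in Lev k, ENNReal.ofReal (s * |A ω| + t * |B ω|) ∂μ :=
            ENNReal.tsum_le_tsum hIlev
        _ = ∫⁻ ω, ENNReal.ofReal (s * |A ω| + t * |B ω|) ∂μ := hcast2.symm
        _ ≤ ∫⁻ ω, (‖s * |A ω| + t * |B ω|‖₊ : ENNReal) ∂μ := by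
            refine lintegral_mono (fun ω => ?_)
            rw [← enorm_eq_nnnorm, Real.enorm_eq_ofReal_abs]
            exact ENNReal.ofReal_le_ofReal (le_abs_self _)
        _ < ⊤ := hHint.2
    -- conditional expectation identity
    have hclev : ∀ k, μ[(Lev k).indicator Z|m1]
        =ᵐ[μ] (Lev k).indicator (fun ω => s * A ω + t * B ω) := by
      intro k
      rw [hZlev k]
      set i1 : Ω → ℝ := (C1 ∩ Lev k).indicator (fun _ => (1:ℝ)) with hi1
      set i2 : Ω → ℝ := (C2 ∩ Lev k).indicator (fun _ => (1:ℝ)) with hi2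
      set i3 : Ω → ℝ := (C3 ∩ Lev k).indicator (fun _ => (1:ℝ)) with hi3
      set i4 : Ω → ℝ := (C4 ∩ Lev k).indicator (fun _ => (1:ℝ)) with hi4
      have hint1 : Integrable (fun ω => (s * pk k) * i1 ω) μ :=
        (integrable_ind _ (hD1m k)).const_mul _
      have hint2 : Integrable (fun ω => (t * qk k) * i2 ω) μ :=
        (integrable_ind _ (hD2m k)).const_mul _
      have hint3 : Integrable (fun ω => (s * pk k) * i3 ω) μ :=
        (integrable_ind _ (hD3m k)).const_mul _
      have hint4 : Integrable (fun ω => (t * qk k) * i4 ω) μ :=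
        (integrable_ind _ (hD4m k)).const_mul _
      have hfun : (fun ω => (s * pk k) * i1 ω + (t * qk k) * i2 ω
          - (s * pk k) * i3 ω - (t * qk k) * i4 ω)
          = ((fun ω => (s * pk k) * i1 ω) + (fun ω => (t * qk k) * i2 ω)
            - (fun ω => (s * pk k) * i3 ω) - (fun ω => (t * qk k) * i4 ω)) := rfl
      rw [hfun]
      have e1 := condExp_sub (μ := μ) (m := m1)
        (((hint1.add hint2)).sub hint3) hint4
      have e2 := condExp_sub (μ := μ) (m := m1) (hint1.add hint2) hint3
      have e3 := condExp_add (μ := μ) (m := m1) hint1 hint2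
      have c1 := condexp_const_mul (μ := μ) (m1 := m1) (s * pk k) i1
      have c2 := condexp_const_mul (μ := μ) (m1 := m1) (t * qk k) i2
      have c3 := condexp_const_mul (μ := μ) (m1 := m1) (s * pk k) i3
      have c4 := condexp_const_mul (μ := μ) (m1 := m1) (t * qk k) i4
      have j1 := cI_inter_m1 (μ := μ) hm hC1m (hLevm1 k)
      have j2 := cI_inter_m1 (μ := μ) hm hC2m (hLevm1 k)
      have j3 := cI_inter_m1 (μ := μ) hm hC3m (hLevm1 k)
      have j4 := cI_inter_m1 (μ := μ) hm hC4m (hLevm1 k)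
      filter_upwards [e1, e2, e3, c1, c2, c3, c4, j1, j2, j3, j4, hC1, hC2, hC3, hC4]
        with ω he1 he2 he3 hc1 hc2 hc3 hc4 hj1 hj2 hj3 hj4 hv1 hv2 hv3 hv4
      rw [he1]
      simp only [Pi.sub_apply]
      rw [he2]
      simp only [Pi.sub_apply]
      rw [he3]
      simp only [Pi.add_apply]
      rw [hc1, hc2, hc3, hc4]
      have hcI1 : (μ[i1|m1]) ω = condIndicator m1 μ (C1 ∩ Lev k) ω := rfl
      have hcI2 : (μ[i2|m1]) ω = condIndicator m1 μ (C2 ∩ Lev k) ω := rfl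
      have hcI3 : (μ[i3|m1]) ω = condIndicator m1 μ (C3 ∩ Lev k) ω := rfl
      have hcI4 : (μ[i4|m1]) ω = condIndicator m1 μ (C4 ∩ Lev k) ω := rfl
      rw [hcI1, hcI2, hcI3, hcI4, hj1, hj2, hj3, hj4]
      by_cases hL : ω ∈ Lev k
      · rw [Set.indicator_of_mem hL, Set.indicator_of_mem hL, Set.indicator_of_mem hL,
          Set.indicator_of_mem hL, Set.indicator_of_mem hL, hv1, hv2, hv3, hv4]
        have hnk : n ω = k := hL
        have hpω : p ω = pk k := by rw [show p ω = pk (n ω) from rfl, hnk]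
        have hqω : q ω = qk k := by rw [show q ω = qk (n ω) from rfl, hnk]
        rw [← hpω, ← hqω]
        show s * p ω * (max (A ω) 0 / p ω) + t * q ω * (max (B ω) 0 / q ω)
          - s * p ω * (max (-A ω) 0 / p ω) - t * q ω * (max (-B ω) 0 / q ω) = _
        have hp0 := (hp_pos ω).ne'
        have hq0 := (hq_pos ω).ne'
        have r1 : s * p ω * (max (A ω) 0 / p ω) = s * max (A ω) 0 := by
          rw [mul_assoc, mul_comm (p ω), div_mul_cancel₀ _ hp0]
        have r2 : t * q ω * (max (B ω) 0 / q ω) = t * max (B ω) 0 := by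
          rw [mul_assoc, mul_comm (q ω), div_mul_cancel₀ _ hq0]
        have r3 : s * p ω * (max (-A ω) 0 / p ω) = s * max (-A ω) 0 := by
          rw [mul_assoc, mul_comm (p ω), div_mul_cancel₀ _ hp0]
        have r4 : t * q ω * (max (-B ω) 0 / q ω) = t * max (-B ω) 0 := by
          rw [mul_assoc, mul_comm (q ω), div_mul_cancel₀ _ hq0]
        rw [r1, r2, r3, r4,
          show s * max (A ω) 0 + t * max (B ω) 0 - s * max (-A ω) 0 - t * max (-B ω) 0
            = s * (max (A ω) 0 - max (-A ω) 0) + t * (max (B ω) 0 - max (-B ω) 0) by ring,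
          max_sub_max_neg, max_sub_max_neg]
      · rw [Set.indicator_of_notMem hL, Set.indicator_of_notMem hL,
          Set.indicator_of_notMem hL, Set.indicator_of_notMem hL,
          Set.indicator_of_notMem hL]
        ring
    have hfinal : μ[Z|m1] =ᵐ[μ] fun ω => s * A ω + t * B ω := by
      have hind : ∀ k, (Lev k).indicator (μ[Z|m1])
          =ᵐ[μ] (Lev k).indicator (fun ω => s * A ω + t * B ω) :=
        fun k => (condExp_indicator hZint (hLevm1 k)).symm.trans (hclev k)
      filter_upwards [ae_all_iff.2 hind] with ω hω
      have h := hω (n ω)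
      rwa [Set.indicator_of_mem (show ω ∈ Lev (n ω) from rfl),
        Set.indicator_of_mem (show ω ∈ Lev (n ω) from rfl)] at h
    exact ⟨hZint, hfinal⟩

  -- the random variables
  set ζ : Ω → ℝ := fun ω => if ω ∈ C1 then p ω else if ω ∈ C2 then q ω
    else if ω ∈ C3 then -(p ω) else if ω ∈ C4 then -(q ω) else 0 with hζdef
  have hζmeas : Measurable ζ := by
    refine Measurable.ite hC1m ((hpm1.mono hm le_rfl)) ?_
    refine Measurable.ite hC2m ((hqm1.mono hm le_rfl)) ?_
    refine Measurable.ite hC3m ((hpm1.mono hm le_rfl).neg) ?_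
    exact Measurable.ite hC4m ((hqm1.mono hm le_rfl).neg) measurable_const
  set η : Ω → ℝ := fun ω => Gfun (ζ ω) with hηdef
  have hηmeas : Measurable η := Gfun_measurable.comp hζmeas
  have hζform : ∀ ω, ζ ω = if ω ∈ C1 then 1 * p ω else if ω ∈ C2 then 1 * q ω
      else if ω ∈ C3 then -(1 * p ω) else if ω ∈ C4 then -(1 * q ω) else 0 := by
    intro ω; simp only [one_mul]; rfl
  have hηform : ∀ ω, η ω = if ω ∈ C1 then 2 * p ω else if ω ∈ C2 then (1/2) * q ω
      else if ω ∈ C3 then -(2 * p ω) else if ω ∈ C4 then -((1/2) * q ω) else 0 := by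
    intro ω
    show Gfun (ζ ω) = _
    rw [hζdef]
    by_cases h1 : ω ∈ C1
    · simp only [if_pos h1]
      exact Gfun_pow_odd (n ω)
    · simp only [if_neg h1]
      by_cases h2 : ω ∈ C2
      · simp only [if_pos h2]
        rw [show q ω = (4:ℝ)^(2 * n ω) from rfl, Gfun_pow_even (n ω)]
        ring
      · simp only [if_neg h2]
        by_cases h3 : ω ∈ C3
        · simp only [if_pos h3]
          rw [Gfun_odd, Gfun_pow_odd (n ω)]
        · simp only [if_neg h3]
          by_cases h4 : ω ∈ C4
          · simp only [if_pos h4]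
            rw [Gfun_odd]
            rw [show q ω = (4:ℝ)^(2 * n ω) from rfl, Gfun_pow_even (n ω)]
            ring
          · simp only [if_neg h4]
            exact Gfun_zero
  obtain ⟨hζint, hζcond⟩ := hmain 1 1 one_pos one_pos ζ hζmeas hζform
  obtain ⟨hηint, hηcond⟩ := hmain 2 (1/2) (by norm_num) (by norm_num) η hηmeas hηform
  refine ⟨ζ, η, hζmeas, hηmeas, hζint, hηint, ?_, ?_, ?_⟩
  · exact ⟨id, Gfun, ζ, monotone_id, Gfun_monotone, hζmeas,
      Filter.Eventually.of_forall (fun ω => rfl),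
      Filter.Eventually.of_forall (fun ω => rfl)⟩
  · refine hζcond.trans ?_
    refine Filter.Eventually.of_forall (fun ω => ?_)
    show 1 * A ω + 1 * B ω = f ω
    rw [hAdef, hBdef]
    ring
  · refine hηcond.trans ?_
    refine Filter.Eventually.of_forall (fun ω => ?_)
    show 2 * A ω + (1/2) * B ω = g ω
    rw [hAdef, hBdef]
    ring
end

section
/- Let (Ω, ℱ₂, P) be a probability space with sub-σ-algebras ℱ₁ ⊆ ℱ₂, and suppose ℱ₂ is atomless conditionally to ℱ₁. There is an absolute constant C ≥ 1 (independent of the data) such that for any two integrable ℱ₁-measurable random variables f, g : Ω → ℝ there exist commonotone ℱ₂-measurable random variables ξ, η with E[ξ ∣ ℱ₁] = f a.s., E[η ∣ ℱ₁] = g a.s., and moreover the Euclidean norm bound ‖(ξ(ω), η(ω))‖ ≤ C · max(‖(f(ω), g(ω))‖, 1) holds for almost every ω. -/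
open MeasureTheory ProbabilityTheory Filter ENNReal Topology

/-- The Euclidean norm on `ℝ²`. -/
noncomputable def euclNorm (p : ℝ × ℝ) : ℝ := Real.sqrt (p.1 ^ 2 + p.2 ^ 2)

namespace CurveAux

/-- scale index of `σ ≥ 2` : the `k` with `2*4^k ≤ σ < 2*4^(k+1)`. -/
noncomputable def KK (σ : ℝ) : ℕ := Nat.log 4 ⌊σ/2⌋₊

noncomputable def posF (σ : ℝ) : ℝ :=
  if σ ≤ 5 * 4 ^ KK σ then (4:ℝ) ^ KK σ else σ - 4 ^ (KK σ + 1)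

noncomputable def FF (σ : ℝ) : ℝ :=
  if 2 ≤ σ then posF σ else if σ ≤ -2 then -posF (-σ) else σ/2

noncomputable def GG (σ : ℝ) : ℝ := σ - FF σ

lemma KK_spec {σ : ℝ} (hσ : 2 ≤ σ) :
    (4:ℝ) ^ KK σ ≤ σ/2 ∧ σ/2 < 4 ^ (KK σ + 1) := by
  have h1 : (1:ℝ) ≤ σ/2 := by linarith
  have hfl : 1 ≤ ⌊σ/2⌋₊ := by
    rw [Nat.one_le_iff_ne_zero, ← Nat.pos_iff_ne_zero, Nat.floor_pos]; exact h1
  constructor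
  · have := Nat.pow_log_le_self 4 (by omega : ⌊σ/2⌋₊ ≠ 0)
    calc (4:ℝ) ^ KK σ ≤ (⌊σ/2⌋₊ : ℝ) := by exact_mod_cast Nat.cast_le.mpr this
    _ ≤ σ/2 := Nat.floor_le (by linarith)
  · have h2 := Nat.lt_pow_succ_log_self (by norm_num : 1 < 4) ⌊σ/2⌋₊
    have h3 : ⌊σ/2⌋₊ + 1 ≤ 4 ^ (KK σ + 1) := h2
    calc σ/2 < ⌊σ/2⌋₊ + 1 := Nat.lt_floor_add_one _
    _ ≤ ((4:ℕ) ^ (KK σ + 1) : ℝ) := by exact_mod_cast Nat.cast_le.mpr h3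
    _ = (4:ℝ) ^ (KK σ + 1) := by push_cast; ring

lemma KK_eq {σ : ℝ} {k : ℕ} (h1 : 2 * 4 ^ k ≤ σ) (h2 : σ < 2 * 4 ^ (k+1)) :
    KK σ = k := by
  apply Nat.log_eq_of_pow_le_of_lt_pow
  · exact Nat.le_floor (by push_cast; linarith)
  · have hp : (0:ℝ) < 4 ^ k := pow_pos (by norm_num) k
    have h0 : (0:ℝ) ≤ σ/2 := by linarith
    have : (⌊σ/2⌋₊ : ℝ) < (4:ℝ) ^ (k+1) := by
      calc (⌊σ/2⌋₊ : ℝ) ≤ σ/2 := Nat.floor_le h0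
      _ < 4 ^ (k+1) := by linarith
    exact_mod_cast this

lemma posF_bounds {σ : ℝ} (hσ : 2 ≤ σ) :
    (4:ℝ) ^ KK σ ≤ posF σ ∧ posF σ ≤ 4 ^ (KK σ + 1) := by
  obtain ⟨hl, hu⟩ := KK_spec hσ
  unfold posF
  split_ifs with h
  · constructor
    · exact le_rfl
    · exact pow_le_pow_right₀ (by norm_num) (Nat.le_succ _)
  · push_neg at h
    constructor
    · have : (4:ℝ)^(KK σ + 1) = 4 * 4 ^ KK σ := by ring
      nlinarith [pow_pos (by norm_num : (0:ℝ) < 4) (KK σ)]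
    · have : (4:ℝ)^(KK σ + 1) = 4 * 4 ^ KK σ := by ring
      nlinarith

lemma posG_bounds {σ : ℝ} (hσ : 2 ≤ σ) :
    (4:ℝ) ^ KK σ ≤ σ - posF σ ∧ σ - posF σ ≤ 4 ^ (KK σ + 1) := by
  obtain ⟨hl, hu⟩ := KK_spec hσ
  unfold posF
  split_ifs with h
  · constructor
    · linarith
    · have : (4:ℝ)^(KK σ + 1) = 4 * 4 ^ KK σ := by ring
      nlinarith
  · constructor
    · have : (4:ℝ)^(KK σ + 1) = 4 * 4 ^ KK σ := by ring
      nlinarith [pow_pos (by norm_num : (0:ℝ) < 4) (KK σ)]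
    · nlinarith [pow_pos (by norm_num : (0:ℝ) < 4) (KK σ)]

lemma KK_mono {a b : ℝ} (ha : 2 ≤ a) (hab : a ≤ b) : KK a ≤ KK b :=
  Nat.log_mono_right (Nat.floor_le_floor (by linarith))

lemma posF_mono {a b : ℝ} (ha : 2 ≤ a) (hab : a ≤ b) : posF a ≤ posF b := by
  have hb : 2 ≤ b := le_trans ha hab
  have hk := KK_mono ha hab
  rcases eq_or_lt_of_le hk with heq | hlt
  · obtain ⟨hal, hau⟩ := KK_spec ha
    unfold posF
    rw [← heq]
    split_ifs with h1 h2 h2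
    · exact le_rfl
    · push_neg at h2
      have h4 : (4:ℝ)^(KK a + 1) = 4 * 4 ^ KK a := by ring
      nlinarith [pow_pos (by norm_num : (0:ℝ) < 4) (KK a)]
    · exfalso; push_neg at h1; linarith
    · linarith
  · calc posF a ≤ 4 ^ (KK a + 1) := (posF_bounds ha).2
    _ ≤ (4:ℝ) ^ KK b := pow_le_pow_right₀ (by norm_num) hlt
    _ ≤ posF b := (posF_bounds hb).1

lemma posG_mono {a b : ℝ} (ha : 2 ≤ a) (hab : a ≤ b) : a - posF a ≤ b - posF b := by
  have hb : 2 ≤ b := le_trans ha hab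
  have hk := KK_mono ha hab
  rcases eq_or_lt_of_le hk with heq | hlt
  · obtain ⟨hal, hau⟩ := KK_spec ha
    obtain ⟨hbl, hbu⟩ := KK_spec hb
    unfold posF
    rw [← heq]
    split_ifs with h1 h2 h2
    · linarith
    · push_neg at h2
      rw [← heq] at hbu
      have : (4:ℝ)^(KK a + 1) = 4 * 4 ^ KK a := by ring
      nlinarith
    · exfalso; push_neg at h1; linarith
    · linarith
  · calc a - posF a ≤ 4 ^ (KK a + 1) := (posG_bounds ha).2
    _ ≤ (4:ℝ) ^ KK b := pow_le_pow_right₀ (by norm_num) hlt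
    _ ≤ b - posF b := (posG_bounds hb).1

lemma one_le_posF {σ : ℝ} (hσ : 2 ≤ σ) : 1 ≤ posF σ := by
  have := (posF_bounds hσ).1
  have h1 : (1:ℝ) ≤ 4 ^ KK σ := one_le_pow₀ (by norm_num)
  linarith

lemma one_le_posG {σ : ℝ} (hσ : 2 ≤ σ) : 1 ≤ σ - posF σ := by
  have := (posG_bounds hσ).1
  have h1 : (1:ℝ) ≤ 4 ^ KK σ := one_le_pow₀ (by norm_num)
  linarith

lemma FF_of_ge {σ : ℝ} (h : 2 ≤ σ) : FF σ = posF σ := by unfold FF; rw [if_pos h]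

lemma FF_of_le {σ : ℝ} (h : σ ≤ -2) : FF σ = -posF (-σ) := by
  unfold FF; rw [if_neg (by linarith), if_pos h]

lemma FF_of_mid {σ : ℝ} (h1 : -2 < σ) (h2 : σ < 2) : FF σ = σ/2 := by
  unfold FF; rw [if_neg (by linarith), if_neg (by linarith)]

lemma GG_of_ge {σ : ℝ} (h : 2 ≤ σ) : GG σ = σ - posF σ := by unfold GG; rw [FF_of_ge h]

lemma GG_of_le {σ : ℝ} (h : σ ≤ -2) : GG σ = -((-σ) - posF (-σ)) := by
  unfold GG; rw [FF_of_le h]; ring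

lemma GG_of_mid {σ : ℝ} (h1 : -2 < σ) (h2 : σ < 2) : GG σ = σ/2 := by
  unfold GG; rw [FF_of_mid h1 h2]; ring

lemma mono_of_pieces {φ : ℝ → ℝ} {ψ : ℝ → ℝ}
    (hφψ : ∀ σ, 2 ≤ σ → φ σ = ψ σ)
    (hneg : ∀ σ, σ ≤ -2 → φ σ = -ψ (-σ))
    (hmid : ∀ σ, -2 < σ → σ < 2 → φ σ = σ/2)
    (hψ1 : ∀ σ, 2 ≤ σ → 1 ≤ ψ σ)
    (hψm : ∀ a b, 2 ≤ a → a ≤ b → ψ a ≤ ψ b) : Monotone φ := by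
  intro a b hab
  rcases le_or_gt 2 a with ha2 | ha2
  · rw [hφψ a ha2, hφψ b (le_trans ha2 hab)]
    exact hψm a b ha2 hab
  rcases le_or_gt a (-2) with han | han
  · rw [hneg a han]
    have h1a : 1 ≤ ψ (-a) := hψ1 _ (by linarith)
    rcases le_or_gt 2 b with hb2 | hb2
    · rw [hφψ b hb2]
      have := hψ1 b hb2
      linarith
    rcases le_or_gt b (-2) with hbn | hbn
    · rw [hneg b hbn]
      have := hψm (-b) (-a) (by linarith) (by linarith)
      linarith
    · rw [hmid b hbn hb2]
      linarith
  · -- mid a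
    rw [hmid a han ha2]
    rcases le_or_gt 2 b with hb2 | hb2
    · rw [hφψ b hb2]
      have := hψ1 b hb2
      linarith
    · rw [hmid b (by linarith) hb2]
      linarith

lemma FF_mono : Monotone FF :=
  mono_of_pieces (fun σ h => FF_of_ge h) (fun σ h => FF_of_le h)
    (fun σ h1 h2 => FF_of_mid h1 h2) (fun σ h => one_le_posF h)
    (fun a b ha hab => posF_mono ha hab)

lemma GG_mono : Monotone GG :=
  mono_of_pieces (ψ := fun σ => σ - posF σ) (fun σ h => GG_of_ge h) (fun σ h => GG_of_le h)
    (fun σ h1 h2 => GG_of_mid h1 h2) (fun σ h => one_le_posG h)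
    (fun a b ha hab => posG_mono ha hab)

lemma posF_le {σ : ℝ} (hσ : 2 ≤ σ) : posF σ ≤ σ := by
  obtain ⟨hl, hu⟩ := KK_spec hσ
  unfold posF
  split_ifs with h
  · linarith
  · nlinarith [pow_pos (by norm_num : (0:ℝ) < 4) (KK σ)]

lemma abs_FF_le (σ : ℝ) : |FF σ| ≤ |σ| := by
  rcases le_or_gt 2 σ with h | h
  · rw [FF_of_ge h, abs_of_nonneg (by linarith [one_le_posF h]),
      abs_of_nonneg (by linarith : (0:ℝ) ≤ σ)]
    exact posF_le h
  rcases le_or_gt σ (-2) with h2 | h2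
  · have h3 : (2:ℝ) ≤ -σ := by linarith
    rw [FF_of_le h2, abs_of_nonpos (by linarith [one_le_posF h3]),
      abs_of_nonpos (by linarith : σ ≤ 0)]
    simpa using posF_le h3
  · rw [FF_of_mid h2 h, abs_div]
    simp only [abs_two]
    linarith [abs_nonneg σ]

lemma abs_GG_le (σ : ℝ) : |GG σ| ≤ |σ| := by
  rcases le_or_gt 2 σ with h | h
  · rw [GG_of_ge h, abs_of_nonneg (by linarith [one_le_posG h]),
      abs_of_nonneg (by linarith : (0:ℝ) ≤ σ)]
    linarith [one_le_posF h]
  rcases le_or_gt σ (-2) with h2 | h2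
  · have h3 : (2:ℝ) ≤ -σ := by linarith
    rw [GG_of_le h2, abs_of_nonpos (by linarith [one_le_posG h3]),
      abs_of_nonpos (by linarith : σ ≤ 0)]
    have := one_le_posF h3
    simp only [neg_neg]
    linarith
  · rw [GG_of_mid h2 h, abs_div]
    simp only [abs_two]
    linarith [abs_nonneg σ]

/-- value on the vertical segment: σ = 2*4^k + c with 0 ≤ c ≤ 4^k. -/
lemma FF_vert {k : ℕ} {c : ℝ} (hc0 : 0 ≤ c) (hc1 : c ≤ 4 ^ k) :
    FF (2 * 4 ^ k + c) = 4 ^ k ∧ GG (2 * 4 ^ k + c) = 4 ^ k + c := by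
  have hp : (1:ℝ) ≤ 4 ^ k := one_le_pow₀ (by norm_num)
  have hσ2 : (2:ℝ) ≤ 2 * 4 ^ k + c := by linarith
  have hK : KK (2 * 4 ^ k + c) = k := by
    apply KK_eq
    · linarith
    · have : (4:ℝ) ^ (k+1) = 4 * 4 ^ k := by ring
      rw [this]; linarith
  have hF : FF (2 * 4 ^ k + c) = 4 ^ k := by
    unfold FF posF
    rw [if_pos hσ2, hK, if_pos (by linarith)]
  exact ⟨hF, by unfold GG; rw [hF]; ring⟩

/-- value on the horizontal segment: σ = 5*4^k + c with 0 ≤ c ≤ 4^k. -/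
lemma FF_horiz {k : ℕ} {c : ℝ} (hc0 : 0 ≤ c) (hc1 : c ≤ 4 ^ k) :
    FF (5 * 4 ^ k + c) = 4 ^ k + c ∧ GG (5 * 4 ^ k + c) = 4 ^ (k+1) := by
  have hp : (1:ℝ) ≤ 4 ^ k := one_le_pow₀ (by norm_num)
  have hσ2 : (2:ℝ) ≤ 5 * 4 ^ k + c := by linarith
  have h4 : (4:ℝ) ^ (k+1) = 4 * 4 ^ k := by ring
  have hK : KK (5 * 4 ^ k + c) = k := by
    apply KK_eq
    · linarith
    · rw [h4]; linarith
  have hF : FF (5 * 4 ^ k + c) = 4 ^ k + c := by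
    unfold FF posF
    rw [if_pos hσ2, hK]
    split_ifs with h
    · have : c ≤ 0 := by linarith
      have : c = 0 := le_antisymm this hc0
      rw [this]; ring
    · rw [h4]; ring
  exact ⟨hF, by unfold GG; rw [hF, h4]; ring⟩

lemma FF_neg {σ : ℝ} (hσ : 2 ≤ σ) : FF (-σ) = - FF σ ∧ GG (-σ) = - GG σ := by
  have h1 : ¬ (2:ℝ) ≤ -σ := by linarith
  have hF : FF (-σ) = - FF σ := by
    unfold FF
    rw [if_neg h1, if_pos (by linarith : -σ ≤ -2), if_pos hσ, neg_neg]
  exact ⟨hF, by unfold GG; rw [hF]; ring⟩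


/-- scale for a target coordinate. -/
noncomputable def jx (x : ℝ) : ℕ := Nat.log 4 (⌊|x|⌋₊ + 1) + 2

lemma jx_lt (x : ℝ) : 4 * |x| < 4 ^ jx x := by
  have h1 : |x| < (⌊|x|⌋₊ : ℝ) + 1 := Nat.lt_floor_add_one _
  have h2 : ⌊|x|⌋₊ + 1 ≤ 4 ^ (Nat.log 4 (⌊|x|⌋₊ + 1) + 1) :=
    le_of_lt (Nat.lt_pow_succ_log_self (by norm_num : (1:ℕ) < 4) (⌊|x|⌋₊ + 1))
  have h2' : ((⌊|x|⌋₊ : ℝ) + 1) ≤ 4 ^ (Nat.log 4 (⌊|x|⌋₊ + 1) + 1) := by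
    exact_mod_cast h2
  have h3 : (4:ℝ) ^ jx x = 4 * 4 ^ (Nat.log 4 (⌊|x|⌋₊ + 1) + 1) := by
    unfold jx; ring
  rw [h3]
  nlinarith [pow_pos (by norm_num : (0:ℝ) < 4) (Nat.log 4 (⌊|x|⌋₊ + 1) + 1)]

lemma jx_le (x : ℝ) : (4:ℝ) ^ jx x ≤ 32 * max |x| 1 := by
  have h2 : (4:ℕ) ^ Nat.log 4 (⌊|x|⌋₊ + 1) ≤ ⌊|x|⌋₊ + 1 :=
    Nat.pow_log_le_self 4 (by omega)
  have h2' : (4:ℝ) ^ Nat.log 4 (⌊|x|⌋₊ + 1) ≤ (⌊|x|⌋₊ : ℝ) + 1 := by exact_mod_cast h2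
  have h1 : (⌊|x|⌋₊ : ℝ) ≤ |x| := Nat.floor_le (abs_nonneg x)
  have h3 : (4:ℝ) ^ jx x = 16 * 4 ^ Nat.log 4 (⌊|x|⌋₊ + 1) := by
    unfold jx; ring
  have h4 : |x| ≤ max |x| 1 := le_max_left _ _
  have h5 : (1:ℝ) ≤ max |x| 1 := le_max_right _ _
  rw [h3]
  nlinarith

lemma measurable_pow_jx : Measurable (fun x : ℝ => (4:ℝ) ^ jx x) := by
  have h1 : Measurable (fun x : ℝ => jx x) := by
    have : Measurable (fun x : ℝ => ⌊|x|⌋₊) :=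
      Measurable.nat_floor (continuous_abs.measurable)
    exact (measurable_from_nat (f := fun n => Nat.log 4 (n + 1) + 2)).comp this
  exact (measurable_from_nat (f := fun n => (4:ℝ) ^ n)).comp h1

noncomputable def sig1 (y : ℝ) : ℝ := 2 * 4 ^ jx y + max (4*y) 0
noncomputable def sig2 (y : ℝ) : ℝ := -(2 * 4 ^ jx y + max (-(4*y)) 0)
noncomputable def sig3 (x : ℝ) : ℝ := 5 * 4 ^ jx x + max (4*x) 0
noncomputable def sig4 (x : ℝ) : ℝ := -(5 * 4 ^ jx x + max (-(4*x)) 0)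

lemma c_le₁ (y : ℝ) : max (4*y) 0 ≤ 4 ^ jx y := by
  have := jx_lt y
  have : 4 * |y| ≤ 4 ^ jx y := le_of_lt this
  have h : 4 * y ≤ 4 * |y| := by nlinarith [le_abs_self y]
  have h0 : (0:ℝ) < 4 ^ jx y := pow_pos (by norm_num) _
  rcases le_total (4*y) 0 with hy | hy
  · rw [max_eq_right hy]; linarith
  · rw [max_eq_left hy]; linarith

lemma c_le₂ (y : ℝ) : max (-(4*y)) 0 ≤ 4 ^ jx y := by
  have := jx_lt y
  have h : -(4 * y) ≤ 4 * |y| := by nlinarith [neg_abs_le y]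
  have h0 : (0:ℝ) < 4 ^ jx y := pow_pos (by norm_num) _
  rcases le_total (-(4*y)) 0 with hy | hy
  · rw [max_eq_right hy]; linarith
  · rw [max_eq_left hy]; linarith

lemma sig1_vals (y : ℝ) :
    FF (sig1 y) = 4 ^ jx y ∧ GG (sig1 y) = 4 ^ jx y + max (4*y) 0 :=
  FF_vert (le_max_right _ _) (c_le₁ y)

lemma sig2_vals (y : ℝ) :
    FF (sig2 y) = -(4 ^ jx y) ∧ GG (sig2 y) = -(4 ^ jx y + max (-(4*y)) 0) := by
  have hp : (1:ℝ) ≤ 4 ^ jx y := one_le_pow₀ (by norm_num)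
  have h2 : (2:ℝ) ≤ 2 * 4 ^ jx y + max (-(4*y)) 0 := by
    have := le_max_right (-(4*y)) 0; linarith
  have hv := FF_vert (le_max_right (-(4*y)) 0) (c_le₂ y)
  have hn := FF_neg h2
  unfold sig2
  constructor
  · rw [hn.1, hv.1]
  · rw [hn.2, hv.2]

lemma sig3_vals (x : ℝ) :
    FF (sig3 x) = 4 ^ jx x + max (4*x) 0 ∧ GG (sig3 x) = 4 ^ (jx x + 1) :=
  FF_horiz (le_max_right _ _) (c_le₁ x)

lemma sig4_vals (x : ℝ) :
    FF (sig4 x) = -(4 ^ jx x + max (-(4*x)) 0) ∧ GG (sig4 x) = -(4 ^ (jx x + 1)) := by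
  have hp : (1:ℝ) ≤ 4 ^ jx x := one_le_pow₀ (by norm_num)
  have h2 : (2:ℝ) ≤ 5 * 4 ^ jx x + max (-(4*x)) 0 := by
    have := le_max_right (-(4*x)) 0; linarith
  have hv := FF_horiz (le_max_right (-(4*x)) 0) (c_le₂ x)
  have hn := FF_neg h2
  unfold sig4
  constructor
  · rw [hn.1, hv.1]
  · rw [hn.2, hv.2]

lemma FF_sum (x y : ℝ) :
    FF (sig1 y) + FF (sig2 y) + FF (sig3 x) + FF (sig4 x) = 4 * x := by
  rw [(sig1_vals y).1, (sig2_vals y).1, (sig3_vals x).1, (sig4_vals x).1]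
  have : max (4*x) 0 - max (-(4*x)) 0 = 4 * x := by
    rcases le_total (4*x) 0 with h | h
    · rw [max_eq_right h, max_eq_left (by linarith)]; ring
    · rw [max_eq_left h, max_eq_right (by linarith)]; ring
  linarith

lemma GG_sum (x y : ℝ) :
    GG (sig1 y) + GG (sig2 y) + GG (sig3 x) + GG (sig4 x) = 4 * y := by
  rw [(sig1_vals y).2, (sig2_vals y).2, (sig3_vals x).2, (sig4_vals x).2]
  have : max (4*y) 0 - max (-(4*y)) 0 = 4 * y := by
    rcases le_total (4*y) 0 with h | h
    · rw [max_eq_right h, max_eq_left (by linarith)]; ring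
    · rw [max_eq_left h, max_eq_right (by linarith)]; ring
  linarith

lemma abs_sig1_le (y : ℝ) : |sig1 y| ≤ 200 * max |y| 1 := by
  have h1 := jx_le y
  have h2 := c_le₁ y
  have h3 : (0:ℝ) ≤ max (4*y) 0 := le_max_right _ _
  have h0 : (0:ℝ) < 4 ^ jx y := pow_pos (by norm_num) _
  rw [abs_of_nonneg (by unfold sig1; positivity)]
  unfold sig1
  linarith

lemma abs_sig2_le (y : ℝ) : |sig2 y| ≤ 200 * max |y| 1 := by
  have h1 := jx_le y
  have h2 := c_le₂ y
  have h3 : (0:ℝ) ≤ max (-(4*y)) 0 := le_max_right _ _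
  have h0 : (0:ℝ) < 4 ^ jx y := pow_pos (by norm_num) _
  have : sig2 y = -(2 * 4 ^ jx y + max (-(4*y)) 0) := rfl
  rw [this, abs_neg, abs_of_nonneg (by positivity)]
  linarith

lemma abs_sig3_le (x : ℝ) : |sig3 x| ≤ 200 * max |x| 1 := by
  have h1 := jx_le x
  have h2 := c_le₁ x
  have h3 : (0:ℝ) ≤ max (4*x) 0 := le_max_right _ _
  have h0 : (0:ℝ) < 4 ^ jx x := pow_pos (by norm_num) _
  rw [abs_of_nonneg (by unfold sig3; positivity)]
  unfold sig3
  linarith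

lemma abs_sig4_le (x : ℝ) : |sig4 x| ≤ 200 * max |x| 1 := by
  have h1 := jx_le x
  have h2 := c_le₂ x
  have h3 : (0:ℝ) ≤ max (-(4*x)) 0 := le_max_right _ _
  have h0 : (0:ℝ) < 4 ^ jx x := pow_pos (by norm_num) _
  have : sig4 x = -(5 * 4 ^ jx x + max (-(4*x)) 0) := rfl
  rw [this, abs_neg, abs_of_nonneg (by positivity)]
  linarith

lemma measurable_sig1 : Measurable sig1 := by
  unfold sig1
  exact ((measurable_pow_jx.const_mul 2).add
    ((measurable_id.const_mul 4).max measurable_const))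

lemma measurable_sig2 : Measurable sig2 := by
  unfold sig2
  exact ((measurable_pow_jx.const_mul 2).add
    (((measurable_id.const_mul 4).neg).max measurable_const)).neg

lemma measurable_sig3 : Measurable sig3 := by
  unfold sig3
  exact ((measurable_pow_jx.const_mul 5).add
    ((measurable_id.const_mul 4).max measurable_const))

lemma measurable_sig4 : Measurable sig4 := by
  unfold sig4
  exact ((measurable_pow_jx.const_mul 5).add
    (((measurable_id.const_mul 4).neg).max measurable_const)).neg

end CurveAux


namespace CondHalf

variable {Ω : Type*} {m1 : MeasurableSpace Ω} [m2 : MeasurableSpace Ω]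
  {μ : Measure Ω} [IsProbabilityMeasure μ]

local notation "hI" => condIndicator m1 μ

lemma integrable_ind {A : Set Ω} (hA : MeasurableSet A) :
    Integrable (A.indicator (fun _ => (1:ℝ))) μ :=
  (integrable_const (1:ℝ)).indicator hA

lemma hI_sm (A : Set Ω) : StronglyMeasurable[m1] (hI A) :=
  stronglyMeasurable_condExp

lemma hI_nonneg (A : Set Ω) : 0 ≤ᵐ[μ] hI A :=
  condExp_nonneg (Filter.Eventually.of_forall fun ω => Set.indicator_nonneg (by intros; norm_num) ω)

lemma hI_mono {A B : Set Ω} (hA : MeasurableSet A) (hB : MeasurableSet B) (hAB : A ⊆ B) :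
    hI A ≤ᵐ[μ] hI B :=
  condExp_mono (integrable_ind hA) (integrable_ind hB)
    (Filter.Eventually.of_forall fun ω =>
      Set.indicator_le_indicator_of_subset hAB (fun _ => zero_le_one) ω)

lemma hI_le_one (hm : m1 ≤ m2) {A : Set Ω} (hA : MeasurableSet A) : hI A ≤ᵐ[μ] 1 := by
  have h1 : hI A ≤ᵐ[μ] μ[(fun _ => (1:ℝ))|m1] :=
    condExp_mono (integrable_ind hA) (integrable_const 1)
      (Filter.Eventually.of_forall fun ω => by
        by_cases h : ω ∈ A <;> simp [Set.indicator_apply, h])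
  have h2 : μ[(fun _ => (1:ℝ))|m1] = fun _ => (1:ℝ) := condExp_const (μ := μ) hm (1:ℝ)
  rw [h2] at h1
  exact h1

lemma hI_union {A B : Set Ω} (hA : MeasurableSet A) (hB : MeasurableSet B)
    (hd : Disjoint A B) : hI (A ∪ B) =ᵐ[μ] hI A + hI B := by
  have : (A ∪ B).indicator (fun _ => (1:ℝ)) =
      A.indicator (fun _ => (1:ℝ)) + B.indicator (fun _ => (1:ℝ)) :=
    Set.indicator_union_of_disjoint hd _
  calc hI (A ∪ B) = μ[A.indicator (fun _ => (1:ℝ)) + B.indicator (fun _ => (1:ℝ))|m1] := by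
        unfold condIndicator; rw [this]
  _ =ᵐ[μ] hI A + hI B := condExp_add (integrable_ind hA) (integrable_ind hB) m1

lemma hI_null {A : Set Ω} (hA : μ A = 0) : hI A =ᵐ[μ] 0 := by
  have h1 : A.indicator (fun _ => (1:ℝ)) =ᵐ[μ] 0 := by
    rw [Filter.EventuallyEq, ae_iff]
    apply measure_mono_null _ hA
    intro ω hω
    simp only [Set.mem_setOf_eq] at hω
    by_contra hmem
    exact hω (by simp [Set.indicator_of_notMem hmem])
  calc hI A =ᵐ[μ] μ[(0 : Ω → ℝ)|m1] := condExp_congr_ae h1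
  _ = 0 := condExp_zero

lemma integral_hI (hm : m1 ≤ m2) {A : Set Ω} (hA : MeasurableSet A) :
    ∫ ω, hI A ω ∂μ = (μ A).toReal := by
  unfold condIndicator
  rw [integral_condExp hm, integral_indicator_const (1:ℝ) hA, smul_eq_mul, mul_one, measureReal_def]

lemma hI_inter_m1 (hm : m1 ≤ m2) {A S : Set Ω} (hA : MeasurableSet A)
    (hS : MeasurableSet[m1] S) :
    hI (A ∩ S) =ᵐ[μ] fun ω => S.indicator (fun _ => (1:ℝ)) ω * hI A ω := by
  have hprod : (A ∩ S).indicator (fun _ => (1:ℝ)) =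
      S.indicator (fun _ => (1:ℝ)) * A.indicator (fun _ => (1:ℝ)) := by
    funext ω
    simp only [Pi.mul_apply, Set.indicator_apply, Set.mem_inter_iff]
    by_cases h1 : ω ∈ A <;> by_cases h2 : ω ∈ S <;> simp [h1, h2]
  have hsm : StronglyMeasurable[m1] (S.indicator (fun _ => (1:ℝ))) :=
    stronglyMeasurable_const.indicator hS
  have hint : Integrable (S.indicator (fun _ => (1:ℝ)) * A.indicator (fun _ => (1:ℝ))) μ := by
    rw [← hprod]; exact integrable_ind (hA.inter (hm _ hS))
  calc hI (A ∩ S) = μ[S.indicator (fun _ => (1:ℝ)) * A.indicator (fun _ => (1:ℝ))|m1] := by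
        unfold condIndicator; rw [hprod]
  _ =ᵐ[μ] S.indicator (fun _ => (1:ℝ)) * hI A :=
      condExp_mul_of_stronglyMeasurable_left hsm hint (integrable_ind hA)
  _ = fun ω => S.indicator (fun _ => (1:ℝ)) ω * hI A ω := rfl

/-- small pieces with positive conditional measure -/
lemma exists_small_piece (hm : m1 ≤ m2) (hCA : CondAtomless m1 μ)
    {A : Set Ω} (hA : MeasurableSet A) (n : ℕ) :
    ∃ E : Set Ω, MeasurableSet E ∧ E ⊆ A ∧
      (∀ᵐ ω ∂μ, hI E ω ≤ (1/2)^n * hI A ω) ∧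
      (∀ᵐ ω ∂μ, 0 < hI A ω → 0 < hI E ω) := by
  induction n with
  | zero =>
    exact ⟨A, hA, subset_rfl, Filter.Eventually.of_forall (fun ω => by norm_num),
      Filter.Eventually.of_forall (fun ω h => h)⟩
  | succ n ih =>
    obtain ⟨E, hE, hEA, hEle, hEpos⟩ := ih
    obtain ⟨B, hB, hBE, hBprop⟩ := hCA E hE
    set T : Set Ω := {ω | hI B ω ≤ hI E ω / 2} with hTdef
    have hT : MeasurableSet[m1] T := by
      exact measurableSet_le (hI_sm B).measurable ((hI_sm E).measurable.div_const 2)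
    set E' : Set Ω := (B ∩ T) ∪ ((E \ B) ∩ Tᶜ) with hE'def
    have hE'm : MeasurableSet E' :=
      ((hB.inter (hm _ hT)).union ((hE.diff hB).inter (hm _ hT.compl)))
    have hE'A : E' ⊆ A := by
      intro ω hω
      rcases hω with h | h
      · exact hEA (hBE h.1)
      · exact hEA h.1.1
    -- conditional measure of E'
    have hdisj : Disjoint (B ∩ T) ((E \ B) ∩ Tᶜ) := by
      apply Set.disjoint_left.mpr
      rintro ω ⟨h1, h2⟩ ⟨h3, h4⟩
      exact h3.2 h1
    have hu : hI E' =ᵐ[μ] hI (B ∩ T) + hI ((E \ B) ∩ Tᶜ) :=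
      hI_union (hB.inter (hm _ hT)) ((hE.diff hB).inter (hm _ hT.compl)) hdisj
    have h1 := hI_inter_m1 (μ := μ) hm hB hT
    have h2 := hI_inter_m1 (μ := μ) hm (hE.diff hB) hT.compl
    have hsplit : hI E =ᵐ[μ] hI B + hI (E \ B) := by
      have : B ∪ (E \ B) = E := Set.union_diff_cancel hBE
      calc hI E = hI (B ∪ (E \ B)) := by rw [this]
      _ =ᵐ[μ] hI B + hI (E \ B) := hI_union (μ := μ) hB (hE.diff hB) Set.disjoint_sdiff_right
    have hBnn := hI_nonneg (m1 := m1) (μ := μ) B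
    have hDnn := hI_nonneg (m1 := m1) (μ := μ) (E \ B)
    refine ⟨E', hE'm, hE'A, ?_, ?_⟩
    · filter_upwards [hu, h1, h2, hsplit, hEle, hBnn, hDnn] with ω e1 e2 e3 e4 e5 e6 e7
      rw [e1]
      simp only [Pi.add_apply]
      rw [e2, e3]
      by_cases hωT : ω ∈ T
      · rw [Set.indicator_of_mem hωT, Set.indicator_of_notMem (by simp [hωT])]
        have : hI B ω ≤ hI E ω / 2 := hωT
        rw [pow_succ]
        simp only [one_mul]
        nlinarith
      · rw [Set.indicator_of_notMem hωT, Set.indicator_of_mem (by simp [hωT])]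
        have hTc : ¬ (hI B ω ≤ hI E ω / 2) := hωT
        push_neg at hTc
        have : hI (E \ B) ω = hI E ω - hI B ω := by rw [e4]; simp
        rw [pow_succ]
        nlinarith
    · filter_upwards [hu, h1, h2, hsplit, hEpos, hBprop] with ω e1 e2 e3 e4 e5 e6 hpos
      have hEω : 0 < hI E ω := e5 hpos
      obtain ⟨hb1, hb2⟩ := e6 hEω
      rw [e1]
      simp only [Pi.add_apply]
      rw [e2, e3]
      by_cases hωT : ω ∈ T
      · rw [Set.indicator_of_mem hωT, Set.indicator_of_notMem (by simp [hωT])]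
        have : hI (E \ B) ω = hI E ω - hI B ω := by rw [e4]; simp
        nlinarith
      · rw [Set.indicator_of_notMem hωT, Set.indicator_of_mem (by simp [hωT])]
        have : hI (E \ B) ω = hI E ω - hI B ω := by rw [e4]; simp
        nlinarith


lemma hI_empty : condIndicator m1 μ (∅ : Set Ω) =ᵐ[μ] 0 := hI_null (by simp)

lemma hI_univ (hm : m1 ≤ m2) : condIndicator m1 μ (Set.univ : Set Ω) = fun _ => (1:ℝ) := by
  unfold condIndicator
  rw [Set.indicator_univ]
  exact condExp_const (μ := μ) hm (1:ℝ)

section Zorn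

lemma exists_exact_half (hm : m1 ≤ m2) (hCA : CondAtomless m1 μ)
    {A : Set Ω} (hA : MeasurableSet A) :
    ∃ M : Set Ω, MeasurableSet M ∧ M ⊆ A ∧
      condIndicator m1 μ M =ᵐ[μ] fun ω => condIndicator m1 μ A ω / 2 := by
  classical
  let P := {B : Set Ω // MeasurableSet B ∧ B ⊆ A ∧
      ∀ᵐ ω ∂μ, condIndicator m1 μ B ω ≤ condIndicator m1 μ A ω / 2}
  let r : P → P → Prop := fun p q => μ (p.1 \ q.1) = 0
  have hr_trans : ∀ {p q z : P}, r p q → r q z → r p z := by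
    intro p q z h1 h2
    have hsub : p.1 \ z.1 ⊆ (p.1 \ q.1) ∪ (q.1 \ z.1) := by
      intro ω hω
      by_cases hq : ω ∈ q.1
      · exact Or.inr ⟨hq, hω.2⟩
      · exact Or.inl ⟨hω.1, hq⟩
    exact measure_mono_null hsub (by
      exact le_antisymm (le_trans (measure_union_le _ _) (by rw [h1, h2]; simp)) zero_le)
  -- the empty element
  have hemp : (∅ : Set Ω) ∈ {B : Set Ω | MeasurableSet B ∧ B ⊆ A ∧
      ∀ᵐ ω ∂μ, condIndicator m1 μ B ω ≤ condIndicator m1 μ A ω / 2} := by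
    refine ⟨MeasurableSet.empty, Set.empty_subset _, ?_⟩
    filter_upwards [hI_empty (m1 := m1) (μ := μ), hI_nonneg (m1 := m1) (μ := μ) A] with ω h1 h2
    simp only [Pi.zero_apply] at h1 h2
    rw [h1]
    linarith
  -- chains are bounded
  have hchain : ∀ c : Set P, IsChain r c → ∃ ub : P, ∀ a ∈ c, r a ub := by
    intro c hc
    rcases Set.eq_empty_or_nonempty c with hce | hcne
    · exact ⟨⟨∅, hemp⟩, by rw [hce]; simp⟩
    -- nonempty chain
    obtain ⟨u, hu_mono, hu_tend, hu_mem⟩ :=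
      exists_seq_tendsto_sSup (α := ℝ≥0∞)
        (S := (fun p : P => μ p.1) '' c) (hcne.image _) (OrderTop.bddAbove _)
    choose p hpc hpμ using fun n => (Set.mem_image _ _ _).mp (hu_mem n)
    set s : ℝ≥0∞ := sSup ((fun p : P => μ p.1) '' c) with hs
    set U : Set Ω := ⋃ n, (p n).1 with hU
    have hUm : MeasurableSet U := MeasurableSet.iUnion (fun n => (p n).2.1)
    have hUA : U ⊆ A := Set.iUnion_subset (fun n => (p n).2.2.1)
    have htendμ : Tendsto (fun n => μ (p n).1) atTop (𝓝 s) := by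
      have : (fun n => μ (p n).1) = u := funext hpμ
      rw [this]; exact hu_tend
    have hsleU : s ≤ μ U :=
      le_of_tendsto htendμ (Filter.Eventually.of_forall
        (fun n => measure_mono (Set.subset_iUnion (fun k => (p k).1) n)))
    -- accumulated sets
    set V : ℕ → Set Ω := fun n => ⋃ (i : ℕ) (_ : i ≤ n), (p i).1 with hV
    have hV0 : V 0 = (p 0).1 := by
      apply Set.Subset.antisymm
      · exact Set.iUnion₂_subset (fun i hi => by rw [Nat.le_zero.mp hi])
      · intro ω hω
        exact Set.mem_iUnion.mpr ⟨0, Set.mem_iUnion.mpr ⟨le_rfl, hω⟩⟩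
    have hVs : ∀ n, V (n+1) = V n ∪ (p (n+1)).1 := by
      intro n
      ext ω
      simp only [hV, Set.mem_iUnion, Set.mem_union]
      constructor
      · rintro ⟨i, hi, hω⟩
        rcases Nat.lt_or_ge i (n+1) with h | h
        · exact Or.inl ⟨i, by omega, hω⟩
        · have : i = n+1 := by omega
          exact Or.inr (this ▸ hω)
      · rintro (⟨i, hi, hω⟩ | hω)
        · exact ⟨i, by omega, hω⟩
        · exact ⟨n+1, le_rfl, hω⟩
    have hVm : ∀ n, MeasurableSet (V n) := fun n =>
      MeasurableSet.biUnion (Set.to_countable _) (fun k _ => (p k).2.1)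
    have hVUall : (⋃ n, V n) = U := by
      apply Set.Subset.antisymm
      · exact Set.iUnion_subset (fun n => Set.iUnion₂_subset
          (fun i _ => Set.subset_iUnion (fun k => (p k).1) i))
      · intro ω hω
        rcases Set.mem_iUnion.mp hω with ⟨n, hn⟩
        exact Set.mem_iUnion.mpr ⟨n, Set.mem_iUnion.mpr ⟨n, Set.mem_iUnion.mpr ⟨le_rfl, hn⟩⟩⟩
    have hVU : ∀ n, V n ⊆ U := fun n => hVUall ▸ Set.subset_iUnion V n
    have hVmono : Monotone V := by
      intro a b hab ω hω
      simp only [hV, Set.mem_iUnion] at hω ⊢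
      obtain ⟨i, hi, h⟩ := hω
      exact ⟨i, le_trans hi hab, h⟩
    have hVclaim : ∀ n, ∃ q ∈ c, μ (V n \ q.1) = 0 := by
      intro n
      induction n with
      | zero =>
        refine ⟨p 0, hpc 0, ?_⟩
        rw [hV0]; simp
      | succ n ih =>
        obtain ⟨q, hqc, hq0⟩ := ih
        have hacc : V (n+1) = V n ∪ (p (n+1)).1 := hVs n
        by_cases heq : q = p (n+1)
        · refine ⟨q, hqc, ?_⟩
          apply measure_mono_null ?_ hq0
          rw [hacc, heq]
          intro ω hω
          rcases hω.1 with h | h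
          · exact ⟨h, hω.2⟩
          · exact absurd h hω.2
        · rcases hc hqc (hpc (n+1)) heq with hr1 | hr1
          · refine ⟨p (n+1), hpc (n+1), ?_⟩
            have hsub : V (n+1) \ (p (n+1)).1 ⊆ (V n \ q.1) ∪ (q.1 \ (p (n+1)).1) := by
              rw [hacc]
              rintro ω ⟨hω1, hω2⟩
              rcases hω1 with h | h
              · by_cases hq : ω ∈ q.1
                · exact Or.inr ⟨hq, hω2⟩
                · exact Or.inl ⟨h, hq⟩
              · exact absurd h hω2
            exact measure_mono_null hsub (le_antisymm
              (le_trans (measure_union_le _ _) (by rw [hq0, hr1]; simp)) zero_le)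
          · refine ⟨q, hqc, ?_⟩
            have hsub : V (n+1) \ q.1 ⊆ (V n \ q.1) ∪ ((p (n+1)).1 \ q.1) := by
              rw [hacc]
              rintro ω ⟨hω1, hω2⟩
              rcases hω1 with h | h
              · exact Or.inl ⟨h, hω2⟩
              · exact Or.inr ⟨h, hω2⟩
            exact measure_mono_null hsub (le_antisymm
              (le_trans (measure_union_le _ _) (by rw [hq0, hr1]; simp)) zero_le)
    have hVbound : ∀ n, ∀ᵐ ω ∂μ, condIndicator m1 μ (V n) ω ≤ condIndicator m1 μ A ω / 2 := by
      intro n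
      obtain ⟨q, hqc, hq0⟩ := hVclaim n
      have h1 : condIndicator m1 μ (V n) ≤ᵐ[μ] condIndicator m1 μ (q.1 ∪ (V n \ q.1)) :=
        hI_mono (hVm n) (q.2.1.union ((hVm n).diff q.2.1)) (fun ω hω => by
          by_cases hq : ω ∈ q.1
          · exact Or.inl hq
          · exact Or.inr ⟨hω, hq⟩)
      have h2 := hI_union (m1 := m1) (μ := μ) q.2.1 ((hVm n).diff q.2.1) Set.disjoint_sdiff_right
      have h3 := hI_null (m1 := m1) (μ := μ) hq0
      filter_upwards [h1, h2, h3, q.2.2.2] with ω e1 e2 e3 e4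
      rw [e2] at e1
      simp only [Pi.add_apply] at e1
      rw [e3] at e1
      simp only [Pi.zero_apply, add_zero] at e1
      linarith
    -- the function ψ
    set φ : ℕ → Ω → ℝ := fun n => condIndicator m1 μ (U \ V n) with hφ
    have hφnn : ∀ᵐ ω ∂μ, ∀ n, 0 ≤ φ n ω := by
      rw [ae_all_iff]
      intro n
      exact hI_nonneg _
    have hsplitU : ∀ n, condIndicator m1 μ U =ᵐ[μ] condIndicator m1 μ (V n) + φ n := by
      intro n
      have : V n ∪ (U \ V n) = U := Set.union_diff_cancel (hVU n)
      calc condIndicator m1 μ U = condIndicator m1 μ (V n ∪ (U \ V n)) := by rw [this]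
      _ =ᵐ[μ] condIndicator m1 μ (V n) + φ n :=
          hI_union (μ := μ) (hVm n) (hUm.diff (hVm n)) Set.disjoint_sdiff_right
    have hμtend : Tendsto (fun n => μ (U \ V n)) atTop (𝓝 0) := by
      have h1 : Tendsto (fun n => μ (U \ V n)) atTop (𝓝 (μ (⋂ n, U \ V n))) := by
        apply tendsto_measure_iInter_atTop
        · exact fun n => (hUm.diff (hVm n)).nullMeasurableSet
        · intro a b hab
          exact Set.diff_subset_diff_right (hVmono hab)
        · exact ⟨0, measure_ne_top μ _⟩
      have h2 : (⋂ n, U \ V n) = ∅ := by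
        rw [← Set.diff_iUnion, hVUall, Set.diff_self]
      rwa [h2, measure_empty] at h1
    have hinttend : Tendsto (fun n => ∫ ω, φ n ω ∂μ) atTop (𝓝 0) := by
      have heq : ∀ n, ∫ ω, φ n ω ∂μ = (μ (U \ V n)).toReal := fun n =>
        integral_hI hm (hUm.diff (hVm n))
      simp_rw [heq]
      have h0 : (0:ℝ) = (0 : ℝ≥0∞).toReal := by simp
      rw [h0]
      exact (ENNReal.tendsto_toReal (by simp)).comp hμtend
    set ψ : Ω → ℝ := fun ω => ⨅ n, φ n ω with hψ
    have hψm : Measurable ψ :=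
      Measurable.iInf (fun n => ((hI_sm (m1 := m1) (μ := μ) _).measurable).mono hm le_rfl)
    have hψle : ∀ᵐ ω ∂μ, ∀ n, ψ ω ≤ φ n ω := by
      filter_upwards [hφnn] with ω hω n
      exact ciInf_le ⟨0, fun x ⟨k, hk⟩ => hk ▸ hω k⟩ n
    have hψnn : ∀ᵐ ω ∂μ, 0 ≤ ψ ω := by
      filter_upwards [hφnn] with ω hω
      exact le_ciInf (fun n => hω n)
    have hψint : Integrable ψ μ := by
      apply Integrable.mono' (g := φ 0) integrable_condExp hψm.aestronglyMeasurable
      filter_upwards [hψle, hψnn] with ω h1 h2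
      rw [Real.norm_eq_abs, abs_of_nonneg h2]
      exact h1 0
    have hψzero : ψ =ᵐ[μ] 0 := by
      have hle : ∀ n, ∫ ω, ψ ω ∂μ ≤ ∫ ω, φ n ω ∂μ := fun n =>
        integral_mono_ae hψint integrable_condExp (by
          filter_upwards [hψle] with ω h; exact h n)
      have h1 : ∫ ω, ψ ω ∂μ ≤ 0 := ge_of_tendsto hinttend
        (Filter.Eventually.of_forall hle)
      have h2 : 0 ≤ ∫ ω, ψ ω ∂μ := integral_nonneg_of_ae hψnn
      have h3 : ∫ ω, ψ ω ∂μ = 0 := le_antisymm h1 h2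
      exact (integral_eq_zero_iff_of_nonneg_ae hψnn hψint).mp h3
    have hUbound : ∀ᵐ ω ∂μ, condIndicator m1 μ U ω ≤ condIndicator m1 μ A ω / 2 := by
      have hVb : ∀ᵐ ω ∂μ, ∀ n, condIndicator m1 μ (V n) ω ≤ condIndicator m1 μ A ω / 2 := by
        rw [ae_all_iff]; exact hVbound
      have hsp : ∀ᵐ ω ∂μ, ∀ n, condIndicator m1 μ U ω
          = condIndicator m1 μ (V n) ω + φ n ω := by
        rw [ae_all_iff]
        intro n
        filter_upwards [hsplitU n] with ω h
        rw [h]; simp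
      filter_upwards [hVb, hsp, hψzero, hφnn] with ω h1 h2 h3 h4
      have key : condIndicator m1 μ U ω - condIndicator m1 μ A ω / 2 ≤ ψ ω := by
        apply le_ciInf
        intro n
        have := h1 n
        have := h2 n
        linarith
      simp only [Pi.zero_apply] at h3
      rw [h3] at key
      linarith
    refine ⟨⟨U, hUm, hUA, hUbound⟩, ?_⟩
    -- upper bound property
    intro pq hpqc
    show μ (pq.1 \ U) = 0
    by_cases hex : ∃ n, μ (pq.1 \ (p n).1) = 0
    · obtain ⟨n, hn⟩ := hex
      exact measure_mono_null
        (Set.diff_subset_diff_right (Set.subset_iUnion (fun k => (p k).1) n)) hn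
    · push_neg at hex
      have hall : ∀ n, μ ((p n).1 \ pq.1) = 0 := by
        intro n
        by_cases heq : pq = p n
        · rw [← heq]; simp
        · rcases hc hpqc (hpc n) heq with h | h
          · exact absurd h (hex n)
          · exact h
      have hUdiff : μ (U \ pq.1) = 0 := by
        rw [hU, Set.iUnion_diff]
        exact measure_iUnion_null hall
      have hμUeq : μ (U ∩ pq.1) = μ U := by
        have := measure_inter_add_diff (μ := μ) U pq.2.1
        rw [hUdiff, add_zero] at this
        exact this
      have hpqles : μ pq.1 ≤ s := le_sSup ⟨pq, hpqc, rfl⟩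
      have hkey : μ pq.1 ≤ μ (pq.1 ∩ U) := by
        rw [Set.inter_comm, hμUeq]
        exact le_trans hpqles hsleU
      have heq2 := measure_inter_add_diff (μ := μ) pq.1 hUm
      have : μ (pq.1 ∩ U) + μ (pq.1 \ U) ≤ μ (pq.1 ∩ U) + 0 := by
        rw [add_zero, heq2]
        exact hkey
      have := (ENNReal.add_le_add_iff_left (measure_ne_top μ _)).mp this
      exact le_antisymm this zero_le
  -- apply Zorn
  obtain ⟨M, hMmax⟩ := exists_maximal_of_chains_bounded hchain (fun {a b c} => hr_trans)
  refine ⟨M.1, M.2.1, M.2.2.1, ?_⟩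
  -- show the conditional measure is exactly half
  have hd0 : ∀ᵐ ω ∂μ, condIndicator m1 μ M.1 ω ≤ condIndicator m1 μ A ω / 2 := M.2.2.2
  have hd1 : ∀ᵐ ω ∂μ, condIndicator m1 μ A ω / 2 ≤ condIndicator m1 μ M.1 ω := by
    by_contra hcon
    set d : Ω → ℝ := fun ω => condIndicator m1 μ A ω / 2 - condIndicator m1 μ M.1 ω with hd
    have hdm : Measurable[m1] d :=
      ((hI_sm (m1 := m1) (μ := μ) A).measurable.div_const 2).sub
        (hI_sm (m1 := m1) (μ := μ) M.1).measurable
    have hpos : μ {ω | 0 < d ω} ≠ 0 := by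
      intro hz
      apply hcon
      have : ∀ᵐ ω ∂μ, ¬ (0 < d ω) := by
        rw [ae_iff]
        simpa using hz
      filter_upwards [this] with ω h
      push_neg at h
      have h2 : d ω ≤ 0 := h
      simp only [hd, sub_nonpos] at h2
      exact h2
    have hcover : {ω | 0 < d ω} = ⋃ n : ℕ, {ω | 1/(n+1 : ℝ) ≤ d ω} := by
      ext ω
      simp only [Set.mem_setOf_eq, Set.mem_iUnion]
      constructor
      · intro h
        obtain ⟨n, hn⟩ := exists_nat_one_div_lt h
        exact ⟨n, le_of_lt hn⟩
      · rintro ⟨n, hn⟩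
        have h0 : (0:ℝ) < 1/(n+1 : ℝ) := by positivity
        exact lt_of_lt_of_le h0 hn
    have hexn : ∃ n : ℕ, μ {ω | 1/(n+1 : ℝ) ≤ d ω} ≠ 0 := by
      by_contra hno
      push_neg at hno
      apply hpos
      rw [hcover]
      exact measure_iUnion_null hno
    obtain ⟨n, hSpos⟩ := hexn
    set τ : ℝ := 1/(n+1 : ℝ) with hτ
    have hτpos : 0 < τ := by positivity
    set S : Set Ω := {ω | τ ≤ d ω} with hS
    have hSm1 : MeasurableSet[m1] S := measurableSet_le measurable_const hdm
    set W : Set Ω := (A \ M.1) ∩ S with hW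
    have hWm : MeasurableSet W := (hA.diff M.2.1).inter (hm _ hSm1)
    obtain ⟨n₀, hn₀⟩ := exists_pow_lt_of_lt_one hτpos (by norm_num : (1:ℝ)/2 < 1)
    obtain ⟨E, hEm, hEW, hEle, hEpos⟩ := exists_small_piece hm hCA hWm n₀
    have hWsplit := hI_inter_m1 (m1 := m1) (μ := μ) hm (hA.diff M.2.1) hSm1
    have hAMsplit : condIndicator m1 μ A =ᵐ[μ]
        condIndicator m1 μ M.1 + condIndicator m1 μ (A \ M.1) := by
      have hud : M.1 ∪ (A \ M.1) = A := Set.union_diff_cancel M.2.2.1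
      calc condIndicator m1 μ A = condIndicator m1 μ (M.1 ∪ (A \ M.1)) := by rw [hud]
      _ =ᵐ[μ] _ := hI_union (m1 := m1) (μ := μ) M.2.1 (hA.diff M.2.1) Set.disjoint_sdiff_right
    have hWle1 := hI_le_one (m1 := m1) (μ := μ) hm hWm
    have hWnn := hI_nonneg (m1 := m1) (μ := μ) W
    have hEnn := hI_nonneg (m1 := m1) (μ := μ) E
    have hpnn : (0:ℝ) ≤ (1/2 : ℝ)^n₀ := by positivity
    have hM'union := hI_union (m1 := m1) (μ := μ) M.2.1 hEm (by
      apply Set.disjoint_left.mpr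
      intro ω hω1 hω2
      exact (hEW hω2).1.2 hω1)
    have hM'bound : ∀ᵐ ω ∂μ,
        condIndicator m1 μ (M.1 ∪ E) ω ≤ condIndicator m1 μ A ω / 2 := by
      filter_upwards [hM'union, hEle, hWsplit, hd0, hWle1, hWnn, hEnn]
        with ω e1 e2 e3 e5 e6 e7 e8
      simp only [Pi.one_apply] at e6
      simp only [Pi.zero_apply] at e7 e8
      rw [e1]
      simp only [Pi.add_apply]
      by_cases hωS : ω ∈ S
      · have hdω : τ ≤ d ω := hωS
        have hMω : condIndicator m1 μ M.1 ω ≤ condIndicator m1 μ A ω / 2 - τ := by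
          simp only [hd] at hdω; linarith
        have hEτ : condIndicator m1 μ E ω ≤ τ := by
          calc condIndicator m1 μ E ω ≤ (1/2)^n₀ * condIndicator m1 μ W ω := e2
          _ ≤ τ * 1 := by nlinarith [le_of_lt hn₀]
          _ = τ := mul_one τ
        linarith
      · have hW0 : condIndicator m1 μ W ω = 0 := by
          rw [e3, Set.indicator_of_notMem hωS, zero_mul]
        have hE0 : condIndicator m1 μ E ω ≤ 0 := by
          calc condIndicator m1 μ E ω ≤ (1/2)^n₀ * condIndicator m1 μ W ω := e2
          _ = 0 := by rw [hW0, mul_zero]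
        linarith
    have hrMM' : r M ⟨M.1 ∪ E, (M.2.1.union hEm),
        Set.union_subset M.2.2.1 (fun ω hω => (hEW hω).1.1), hM'bound⟩ := by
      show μ (M.1 \ (M.1 ∪ E)) = 0
      have hempty : M.1 \ (M.1 ∪ E) = ∅ := by
        ext ω
        simp only [Set.mem_diff, Set.mem_union, Set.mem_empty_iff_false, iff_false]
        rintro ⟨h1, h2⟩
        exact h2 (Or.inl h1)
      rw [hempty]; simp
    have hback := hMmax _ hrMM'
    have hμE : μ E = 0 := by
      have hsub : E ⊆ (M.1 ∪ E) \ M.1 := by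
        intro ω hω
        exact ⟨Or.inr hω, fun hc2 => (hEW hω).1.2 hc2⟩
      exact measure_mono_null hsub hback
    have hIE0 : condIndicator m1 μ E =ᵐ[μ] 0 := hI_null hμE
    have hSnull : ∀ᵐ ω ∂μ, ω ∉ S := by
      filter_upwards [hEpos, hIE0, hWsplit, hAMsplit, hd0,
        hI_nonneg (m1 := m1) (μ := μ) A] with ω e1 e2 e3 e4 e5 e6
      intro hωS
      have hdω : τ ≤ d ω := hωS
      have hWpos : 0 < condIndicator m1 μ W ω := by
        rw [e3, Set.indicator_of_mem hωS, one_mul]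
        have hdiff : condIndicator m1 μ (A \ M.1) ω
            = condIndicator m1 μ A ω - condIndicator m1 μ M.1 ω := by
          rw [e4]; simp
        rw [hdiff]
        simp only [hd] at hdω
        simp only [Pi.zero_apply] at e6
        linarith
      have hEgt := e1 hWpos
      simp only [Pi.zero_apply] at e2
      rw [e2] at hEgt
      exact lt_irrefl 0 hEgt
    apply hSpos
    have hae := hSnull
    rw [ae_iff] at hae
    simpa [hS] using hae
  filter_upwards [hd0, hd1] with ω h1 h2
  exact le_antisymm h1 h2

lemma exists_quarter_partition (hm : m1 ≤ m2) (hCA : CondAtomless m1 μ) :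
    ∃ C1 C2 C3 C4 : Set Ω,
      MeasurableSet C1 ∧ MeasurableSet C2 ∧ MeasurableSet C3 ∧ MeasurableSet C4 ∧
      (∀ ω, ω ∈ C1 ∨ ω ∈ C2 ∨ ω ∈ C3 ∨ ω ∈ C4) ∧
      (Disjoint C1 C2 ∧ Disjoint C1 C3 ∧ Disjoint C1 C4 ∧
        Disjoint C2 C3 ∧ Disjoint C2 C4 ∧ Disjoint C3 C4) ∧
      (condIndicator m1 μ C1 =ᵐ[μ] fun _ => (1:ℝ)/4) ∧
      (condIndicator m1 μ C2 =ᵐ[μ] fun _ => (1:ℝ)/4) ∧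
      (condIndicator m1 μ C3 =ᵐ[μ] fun _ => (1:ℝ)/4) ∧
      (condIndicator m1 μ C4 =ᵐ[μ] fun _ => (1:ℝ)/4) := by
  obtain ⟨M, hMm, hMsub, hMhalf⟩ := exists_exact_half hm hCA MeasurableSet.univ
  have hIuniv := hI_univ (m1 := m1) (μ := μ) hm
  have hM12 : condIndicator m1 μ M =ᵐ[μ] fun _ => (1:ℝ)/2 := by
    filter_upwards [hMhalf] with ω h
    rw [h, hIuniv]
  have hMc : MeasurableSet (Set.univ \ M) := MeasurableSet.univ.diff hMm
  have hsplit : condIndicator m1 μ (Set.univ : Set Ω) =ᵐ[μ]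
      condIndicator m1 μ M + condIndicator m1 μ (Set.univ \ M) := by
    have hud : M ∪ (Set.univ \ M) = Set.univ := Set.union_diff_cancel hMsub
    calc condIndicator m1 μ (Set.univ : Set Ω)
        = condIndicator m1 μ (M ∪ (Set.univ \ M)) := by rw [hud]
    _ =ᵐ[μ] _ := hI_union (m1 := m1) (μ := μ) hMm hMc Set.disjoint_sdiff_right
  have hMc12 : condIndicator m1 μ (Set.univ \ M) =ᵐ[μ] fun _ => (1:ℝ)/2 := by
    filter_upwards [hsplit, hM12] with ω h1 h2
    have := congrFun hIuniv ω
    simp only [Pi.add_apply] at h1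
    rw [this, h2] at h1
    linarith
  obtain ⟨M1, hM1m, hM1sub, hM1half⟩ := exists_exact_half hm hCA hMm
  obtain ⟨M2, hM2m, hM2sub, hM2half⟩ := exists_exact_half hm hCA hMc
  have hC1 : condIndicator m1 μ M1 =ᵐ[μ] fun _ => (1:ℝ)/4 := by
    filter_upwards [hM1half, hM12] with ω h1 h2
    rw [h1, h2]; norm_num
  have hC3 : condIndicator m1 μ M2 =ᵐ[μ] fun _ => (1:ℝ)/4 := by
    filter_upwards [hM2half, hMc12] with ω h1 h2
    rw [h1, h2]; norm_num
  have hsplitM : condIndicator m1 μ M =ᵐ[μ]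
      condIndicator m1 μ M1 + condIndicator m1 μ (M \ M1) := by
    have hud : M1 ∪ (M \ M1) = M := Set.union_diff_cancel hM1sub
    calc condIndicator m1 μ M = condIndicator m1 μ (M1 ∪ (M \ M1)) := by rw [hud]
    _ =ᵐ[μ] _ := hI_union (m1 := m1) (μ := μ) hM1m (hMm.diff hM1m) Set.disjoint_sdiff_right
  have hC2 : condIndicator m1 μ (M \ M1) =ᵐ[μ] fun _ => (1:ℝ)/4 := by
    filter_upwards [hsplitM, hM12, hC1] with ω h1 h2 h3
    simp only [Pi.add_apply] at h1
    rw [h2, h3] at h1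
    norm_num at h1 ⊢
    linarith
  have hsplitMc : condIndicator m1 μ (Set.univ \ M) =ᵐ[μ]
      condIndicator m1 μ M2 + condIndicator m1 μ ((Set.univ \ M) \ M2) := by
    have hud : M2 ∪ ((Set.univ \ M) \ M2) = Set.univ \ M := Set.union_diff_cancel hM2sub
    calc condIndicator m1 μ (Set.univ \ M)
        = condIndicator m1 μ (M2 ∪ ((Set.univ \ M) \ M2)) := by rw [hud]
    _ =ᵐ[μ] _ := hI_union (m1 := m1) (μ := μ) hM2m (hMc.diff hM2m) Set.disjoint_sdiff_right
  have hC4 : condIndicator m1 μ ((Set.univ \ M) \ M2) =ᵐ[μ] fun _ => (1:ℝ)/4 := by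
    filter_upwards [hsplitMc, hMc12, hC3] with ω h1 h2 h3
    simp only [Pi.add_apply] at h1
    rw [h2, h3] at h1
    norm_num at h1 ⊢
    linarith
  refine ⟨M1, M \ M1, M2, (Set.univ \ M) \ M2, hM1m, hMm.diff hM1m, hM2m, hMc.diff hM2m,
    ?_, ⟨?_, ?_, ?_, ?_, ?_, ?_⟩, hC1, hC2, hC3, hC4⟩
  · intro ω
    by_cases hωM : ω ∈ M
    · by_cases hω1 : ω ∈ M1
      · exact Or.inl hω1
      · exact Or.inr (Or.inl ⟨hωM, hω1⟩)
    · by_cases hω2 : ω ∈ M2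
      · exact Or.inr (Or.inr (Or.inl hω2))
      · exact Or.inr (Or.inr (Or.inr ⟨⟨trivial, hωM⟩, hω2⟩))
  · exact Set.disjoint_sdiff_right
  · exact Set.disjoint_left.mpr (fun ω h1 h2 => (hM2sub h2).2 (hM1sub h1))
  · exact Set.disjoint_left.mpr (fun ω h1 h2 => h2.1.2 (hM1sub h1))
  · exact Set.disjoint_left.mpr (fun ω h1 h2 => (hM2sub h2).2 h1.1)
  · exact Set.disjoint_left.mpr (fun ω h1 h2 => h2.1.2 h1.1)
  · exact Set.disjoint_left.mpr (fun ω h1 h2 => h2.2 h1)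

lemma condexp_four_cells (hm : m1 ≤ m2) {C1 C2 C3 C4 : Set Ω}
    (hC1m : MeasurableSet C1) (hC2m : MeasurableSet C2)
    (hC3m : MeasurableSet C3) (hC4m : MeasurableSet C4)
    (hq1 : condIndicator m1 μ C1 =ᵐ[μ] fun _ => (1:ℝ)/4)
    (hq2 : condIndicator m1 μ C2 =ᵐ[μ] fun _ => (1:ℝ)/4)
    (hq3 : condIndicator m1 μ C3 =ᵐ[μ] fun _ => (1:ℝ)/4)
    (hq4 : condIndicator m1 μ C4 =ᵐ[μ] fun _ => (1:ℝ)/4)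
    {X1 X2 X3 X4 bound : Ω → ℝ}
    (hX1 : Measurable[m1] X1) (hX2 : Measurable[m1] X2)
    (hX3 : Measurable[m1] X3) (hX4 : Measurable[m1] X4)
    (hb1 : ∀ ω, |X1 ω| ≤ bound ω) (hb2 : ∀ ω, |X2 ω| ≤ bound ω)
    (hb3 : ∀ ω, |X3 ω| ≤ bound ω) (hb4 : ∀ ω, |X4 ω| ≤ bound ω)
    (hbint : Integrable bound μ) :
    μ[(fun ω => X1 ω * C1.indicator (fun _ => (1:ℝ)) ω
        + X2 ω * C2.indicator (fun _ => (1:ℝ)) ω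
        + X3 ω * C3.indicator (fun _ => (1:ℝ)) ω
        + X4 ω * C4.indicator (fun _ => (1:ℝ)) ω)|m1]
      =ᵐ[μ] fun ω => (X1 ω + X2 ω + X3 ω + X4 ω)/4 := by
  have habs : ∀ (X : Ω → ℝ) (C : Set Ω), (∀ ω, |X ω| ≤ bound ω) →
      ∀ ω, ‖X ω * C.indicator (fun _ => (1:ℝ)) ω‖ ≤ bound ω := by
    intro X C hb ω
    rw [Real.norm_eq_abs, abs_mul]
    by_cases h : ω ∈ C
    · rw [Set.indicator_of_mem h]
      simpa using hb ω
    · rw [Set.indicator_of_notMem h]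
      simp only [abs_zero, mul_zero]
      exact le_trans (abs_nonneg _) (hb ω)
  have hmeas : ∀ (X : Ω → ℝ) (C : Set Ω), Measurable[m1] X → MeasurableSet C →
      AEStronglyMeasurable (fun ω => X ω * C.indicator (fun _ => (1:ℝ)) ω) μ := by
    intro X C hX hC
    exact (((hX.mono hm le_rfl).mul
      (measurable_const.indicator hC)).stronglyMeasurable).aestronglyMeasurable
  have hint1 : Integrable (fun ω => X1 ω * C1.indicator (fun _ => (1:ℝ)) ω) μ :=
    Integrable.mono' hbint (hmeas _ _ hX1 hC1m)
      (Filter.Eventually.of_forall (habs _ _ hb1))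
  have hint2 : Integrable (fun ω => X2 ω * C2.indicator (fun _ => (1:ℝ)) ω) μ :=
    Integrable.mono' hbint (hmeas _ _ hX2 hC2m)
      (Filter.Eventually.of_forall (habs _ _ hb2))
  have hint3 : Integrable (fun ω => X3 ω * C3.indicator (fun _ => (1:ℝ)) ω) μ :=
    Integrable.mono' hbint (hmeas _ _ hX3 hC3m)
      (Filter.Eventually.of_forall (habs _ _ hb3))
  have hint4 : Integrable (fun ω => X4 ω * C4.indicator (fun _ => (1:ℝ)) ω) μ :=
    Integrable.mono' hbint (hmeas _ _ hX4 hC4m)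
      (Filter.Eventually.of_forall (habs _ _ hb4))
  have hpull : ∀ (X : Ω → ℝ) (C : Set Ω) (hX : Measurable[m1] X) (hC : MeasurableSet C),
      Integrable (fun ω => X ω * C.indicator (fun _ => (1:ℝ)) ω) μ →
      (condIndicator m1 μ C =ᵐ[μ] fun _ => (1:ℝ)/4) →
      μ[(fun ω => X ω * C.indicator (fun _ => (1:ℝ)) ω)|m1] =ᵐ[μ] fun ω => X ω / 4 := by
    intro X C hX hC hint hq
    have h1 : (fun ω => X ω * C.indicator (fun _ => (1:ℝ)) ω)
        = X * C.indicator (fun _ => (1:ℝ)) := rfl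
    rw [h1]
    have h2 := condExp_mul_of_stronglyMeasurable_left (μ := μ) hX.stronglyMeasurable
      (by rw [← h1]; exact hint) (integrable_ind hC)
    refine h2.trans ?_
    have hq' : μ[C.indicator (fun _ => (1:ℝ))|m1] =ᵐ[μ] fun _ => (1:ℝ)/4 := hq
    filter_upwards [hq'] with ω h
    simp only [Pi.mul_apply]
    rw [h]
    ring
  have e1 := hpull X1 C1 hX1 hC1m hint1 hq1
  have e2 := hpull X2 C2 hX2 hC2m hint2 hq2
  have e3 := hpull X3 C3 hX3 hC3m hint3 hq3
  have e4 := hpull X4 C4 hX4 hC4m hint4 hq4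
  have hadd12 := condExp_add (μ := μ) (m := m1) hint1 hint2
  have hadd123 := condExp_add (μ := μ) (m := m1) (hint1.add hint2) hint3
  have hadd := condExp_add (μ := μ) (m := m1) ((hint1.add hint2).add hint3) hint4
  calc μ[(fun ω => X1 ω * C1.indicator (fun _ => (1:ℝ)) ω
        + X2 ω * C2.indicator (fun _ => (1:ℝ)) ω
        + X3 ω * C3.indicator (fun _ => (1:ℝ)) ω
        + X4 ω * C4.indicator (fun _ => (1:ℝ)) ω)|m1]
      = μ[((fun ω => X1 ω * C1.indicator (fun _ => (1:ℝ)) ω)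
        + (fun ω => X2 ω * C2.indicator (fun _ => (1:ℝ)) ω)
        + (fun ω => X3 ω * C3.indicator (fun _ => (1:ℝ)) ω)
        + (fun ω => X4 ω * C4.indicator (fun _ => (1:ℝ)) ω))|m1] := by rfl
  _ =ᵐ[μ] _ := by
      filter_upwards [hadd, hadd123, hadd12, e1, e2, e3, e4] with ω w1 w2 w3 w4 w5 w6 w7
      rw [w1]
      simp only [Pi.add_apply]
      rw [w2]
      simp only [Pi.add_apply]
      rw [w3]
      simp only [Pi.add_apply]
      rw [w4, w5, w6, w7]
      ring

end Zorn
end CondHalf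


theorem commonotone_condexp_representation_with_bound :
    ∃ C : ℝ, 1 ≤ C ∧
      ∀ (Ω : Type) (m1 m2 : MeasurableSpace Ω), m1 ≤ m2 →
        ∀ (μ : @Measure Ω m2), @IsProbabilityMeasure Ω m2 μ →
          @CondAtomless Ω m1 m2 μ →
          ∀ (f g : Ω → ℝ), Measurable[m1] f → Measurable[m1] g →
            Integrable f μ → Integrable g μ →
              ∃ ξ η : Ω → ℝ, Measurable[m2] ξ ∧ Measurable[m2] η ∧
                @Commonotone Ω m2 μ ξ η ∧
                condExp m1 μ ξ =ᵐ[μ] f ∧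
                condExp m1 μ η =ᵐ[μ] g ∧
                ∀ᵐ ω ∂μ, euclNorm (ξ ω, η ω) ≤ C * max (euclNorm (f ω, g ω)) 1 := by
  classical
  refine ⟨512, by norm_num, ?_⟩
  intro Ω m1 m2 hm μ hProb hCA f g hf hg hfint hgint
  obtain ⟨C1, C2, C3, C4, hC1m, hC2m, hC3m, hC4m, hcover,
    ⟨hd12, hd13, hd14, hd23, hd24, hd34⟩, hq1, hq2, hq3, hq4⟩ :=
    CondHalf.exists_quarter_partition (m1 := m1) (μ := μ) hm hCA
  -- the four σ-values (m1-measurable functions of f, g)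
  set σ1 : Ω → ℝ := fun ω => CurveAux.sig1 (g ω) with hσ1
  set σ2 : Ω → ℝ := fun ω => CurveAux.sig2 (g ω) with hσ2
  set σ3 : Ω → ℝ := fun ω => CurveAux.sig3 (f ω) with hσ3
  set σ4 : Ω → ℝ := fun ω => CurveAux.sig4 (f ω) with hσ4
  set I1 : Ω → ℝ := C1.indicator (fun _ => (1:ℝ)) with hI1
  set I2 : Ω → ℝ := C2.indicator (fun _ => (1:ℝ)) with hI2
  set I3 : Ω → ℝ := C3.indicator (fun _ => (1:ℝ)) with hI3
  set I4 : Ω → ℝ := C4.indicator (fun _ => (1:ℝ)) with hI4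
  set ζ : Ω → ℝ := fun ω => I1 ω * σ1 ω + I2 ω * σ2 ω + I3 ω * σ3 ω + I4 ω * σ4 ω with hζ
  -- cell structure
  have hcell : ∀ ω, (ω ∈ C1 ∧ ζ ω = σ1 ω) ∨ (ω ∈ C2 ∧ ζ ω = σ2 ω) ∨
      (ω ∈ C3 ∧ ζ ω = σ3 ω) ∨ (ω ∈ C4 ∧ ζ ω = σ4 ω) := by
    intro ω
    rcases hcover ω with h | h | h | h
    · refine Or.inl ⟨h, ?_⟩
      have n2 : ω ∉ C2 := fun h2 => (Set.disjoint_left.mp hd12) h h2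
      have n3 : ω ∉ C3 := fun h3 => (Set.disjoint_left.mp hd13) h h3
      have n4 : ω ∉ C4 := fun h4 => (Set.disjoint_left.mp hd14) h h4
      simp only [hζ, hI1, hI2, hI3, hI4, Set.indicator_of_mem h,
        Set.indicator_of_notMem n2, Set.indicator_of_notMem n3,
        Set.indicator_of_notMem n4]
      ring
    · refine Or.inr (Or.inl ⟨h, ?_⟩)
      have n1 : ω ∉ C1 := fun h1 => (Set.disjoint_left.mp hd12) h1 h
      have n3 : ω ∉ C3 := fun h3 => (Set.disjoint_left.mp hd23) h h3
      have n4 : ω ∉ C4 := fun h4 => (Set.disjoint_left.mp hd24) h h4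
      simp only [hζ, hI1, hI2, hI3, hI4, Set.indicator_of_mem h,
        Set.indicator_of_notMem n1, Set.indicator_of_notMem n3,
        Set.indicator_of_notMem n4]
      ring
    · refine Or.inr (Or.inr (Or.inl ⟨h, ?_⟩))
      have n1 : ω ∉ C1 := fun h1 => (Set.disjoint_left.mp hd13) h1 h
      have n2 : ω ∉ C2 := fun h2 => (Set.disjoint_left.mp hd23) h2 h
      have n4 : ω ∉ C4 := fun h4 => (Set.disjoint_left.mp hd34) h h4
      simp only [hζ, hI1, hI2, hI3, hI4, Set.indicator_of_mem h,
        Set.indicator_of_notMem n1, Set.indicator_of_notMem n2,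
        Set.indicator_of_notMem n4]
      ring
    · refine Or.inr (Or.inr (Or.inr ⟨h, ?_⟩))
      have n1 : ω ∉ C1 := fun h1 => (Set.disjoint_left.mp hd14) h1 h
      have n2 : ω ∉ C2 := fun h2 => (Set.disjoint_left.mp hd24) h2 h
      have n3 : ω ∉ C3 := fun h3 => (Set.disjoint_left.mp hd34) h3 h
      simp only [hζ, hI1, hI2, hI3, hI4, Set.indicator_of_mem h,
        Set.indicator_of_notMem n1, Set.indicator_of_notMem n2,
        Set.indicator_of_notMem n3]
      ring
  -- representation of T ∘ ζ as a linear combination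
  have hrep : ∀ T : ℝ → ℝ, (fun ω => T (ζ ω)) = fun ω =>
      (fun ω => T (σ1 ω)) ω * I1 ω + (fun ω => T (σ2 ω)) ω * I2 ω +
      (fun ω => T (σ3 ω)) ω * I3 ω + (fun ω => T (σ4 ω)) ω * I4 ω := by
    intro T
    funext ω
    rcases hcover ω with h | h | h | h
    · have n2 : ω ∉ C2 := fun h2 => (Set.disjoint_left.mp hd12) h h2
      have n3 : ω ∉ C3 := fun h3 => (Set.disjoint_left.mp hd13) h h3
      have n4 : ω ∉ C4 := fun h4 => (Set.disjoint_left.mp hd14) h h4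
      have hz : ζ ω = σ1 ω := by
        rcases hcell ω with ⟨_, hh⟩ | ⟨hh, _⟩ | ⟨hh, _⟩ | ⟨hh, _⟩
        · exact hh
        · exact absurd hh n2
        · exact absurd hh n3
        · exact absurd hh n4
      simp only [hz, hI1, hI2, hI3, hI4, Set.indicator_of_mem h,
        Set.indicator_of_notMem n2, Set.indicator_of_notMem n3,
        Set.indicator_of_notMem n4]
      ring
    · have n1 : ω ∉ C1 := fun h1 => (Set.disjoint_left.mp hd12) h1 h
      have n3 : ω ∉ C3 := fun h3 => (Set.disjoint_left.mp hd23) h h3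
      have n4 : ω ∉ C4 := fun h4 => (Set.disjoint_left.mp hd24) h h4
      have hz : ζ ω = σ2 ω := by
        rcases hcell ω with ⟨hh, _⟩ | ⟨_, hh⟩ | ⟨hh, _⟩ | ⟨hh, _⟩
        · exact absurd hh n1
        · exact hh
        · exact absurd hh n3
        · exact absurd hh n4
      simp only [hz, hI1, hI2, hI3, hI4, Set.indicator_of_mem h,
        Set.indicator_of_notMem n1, Set.indicator_of_notMem n3,
        Set.indicator_of_notMem n4]
      ring
    · have n1 : ω ∉ C1 := fun h1 => (Set.disjoint_left.mp hd13) h1 h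
      have n2 : ω ∉ C2 := fun h2 => (Set.disjoint_left.mp hd23) h2 h
      have n4 : ω ∉ C4 := fun h4 => (Set.disjoint_left.mp hd34) h h4
      have hz : ζ ω = σ3 ω := by
        rcases hcell ω with ⟨hh, _⟩ | ⟨hh, _⟩ | ⟨_, hh⟩ | ⟨hh, _⟩
        · exact absurd hh n1
        · exact absurd hh n2
        · exact hh
        · exact absurd hh n4
      simp only [hz, hI1, hI2, hI3, hI4, Set.indicator_of_mem h,
        Set.indicator_of_notMem n1, Set.indicator_of_notMem n2,
        Set.indicator_of_notMem n4]
      ring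
    · have n1 : ω ∉ C1 := fun h1 => (Set.disjoint_left.mp hd14) h1 h
      have n2 : ω ∉ C2 := fun h2 => (Set.disjoint_left.mp hd24) h2 h
      have n3 : ω ∉ C3 := fun h3 => (Set.disjoint_left.mp hd34) h3 h
      have hz : ζ ω = σ4 ω := by
        rcases hcell ω with ⟨hh, _⟩ | ⟨hh, _⟩ | ⟨hh, _⟩ | ⟨_, hh⟩
        · exact absurd hh n1
        · exact absurd hh n2
        · exact absurd hh n3
        · exact hh
      simp only [hz, hI1, hI2, hI3, hI4, Set.indicator_of_mem h,
        Set.indicator_of_notMem n1, Set.indicator_of_notMem n2,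
        Set.indicator_of_notMem n3]
      ring
  -- measurability
  have hσ1m1 : Measurable[m1] σ1 := CurveAux.measurable_sig1.comp hg
  have hσ2m1 : Measurable[m1] σ2 := CurveAux.measurable_sig2.comp hg
  have hσ3m1 : Measurable[m1] σ3 := CurveAux.measurable_sig3.comp hf
  have hσ4m1 : Measurable[m1] σ4 := CurveAux.measurable_sig4.comp hf
  have hζm : Measurable[m2] ζ := by
    apply Measurable.add
    apply Measurable.add
    apply Measurable.add
    all_goals
      exact ((measurable_const.indicator (by assumption)).mul
        (by first
          | exact hσ1m1.mono hm le_rfl | exact hσ2m1.mono hm le_rfl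
          | exact hσ3m1.mono hm le_rfl | exact hσ4m1.mono hm le_rfl))
  -- bounds and integrability
  have hbnd1 : ∀ ω, 200 * max |g ω| 1 ≤
      200 * max |f ω| 1 + 200 * max |g ω| 1 := by
    intro ω
    have : (0:ℝ) ≤ 200 * max |f ω| 1 := by positivity
    linarith
  have hbnd2 : ∀ ω, 200 * max |f ω| 1 ≤
      200 * max |f ω| 1 + 200 * max |g ω| 1 := by
    intro ω
    have : (0:ℝ) ≤ 200 * max |g ω| 1 := by positivity
    linarith
  have hbint : Integrable (fun ω => 200 * max |f ω| 1 + 200 * max |g ω| 1) μ := by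
    have hdom : Integrable (fun ω => 200 * (|f ω| + 1) + 200 * (|g ω| + 1)) μ := by
      apply Integrable.add
      · exact (hfint.abs.add (integrable_const 1)).const_mul 200
      · exact (hgint.abs.add (integrable_const 1)).const_mul 200
    apply Integrable.mono' hdom
    · apply Measurable.aestronglyMeasurable
      apply Measurable.add
      · exact (((hf.mono hm le_rfl).abs.max measurable_const).const_mul 200)
      · exact (((hg.mono hm le_rfl).abs.max measurable_const).const_mul 200)
    · refine Filter.Eventually.of_forall (fun ω => ?_)
      rw [Real.norm_eq_abs]
      have e1 : max |f ω| 1 ≤ |f ω| + 1 := by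
        apply max_le
        · linarith [abs_nonneg (f ω)]
        · linarith [abs_nonneg (f ω)]
      have e2 : max |g ω| 1 ≤ |g ω| + 1 := by
        apply max_le
        · linarith [abs_nonneg (g ω)]
        · linarith [abs_nonneg (g ω)]
      have e3 : (0:ℝ) ≤ 200 * max |f ω| 1 + 200 * max |g ω| 1 := by positivity
      rw [abs_of_nonneg e3]
      have e4 : (1:ℝ) ≤ max |f ω| 1 := le_max_right _ _
      nlinarith
  have htri : ∀ a b : ℝ, euclNorm (a, b) ≤ |a| + |b| := by
    intro a b
    unfold euclNorm
    have h1 : a^2 + b^2 ≤ (|a| + |b|)^2 := by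
      have := abs_nonneg a
      have := abs_nonneg b
      nlinarith [sq_abs a, sq_abs b]
    calc Real.sqrt ((a,b).1^2 + (a,b).2^2) ≤ Real.sqrt ((|a| + |b|)^2) := by
          apply Real.sqrt_le_sqrt
          simpa using h1
    _ = |a| + |b| := Real.sqrt_sq (by positivity)
  have habs1 : ∀ a b : ℝ, |a| ≤ euclNorm (a, b) := by
    intro a b
    unfold euclNorm
    rw [← Real.sqrt_sq_eq_abs]
    apply Real.sqrt_le_sqrt
    nlinarith [sq_nonneg b]
  have habs2 : ∀ a b : ℝ, |b| ≤ euclNorm (a, b) := by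
    intro a b
    unfold euclNorm
    rw [← Real.sqrt_sq_eq_abs]
    apply Real.sqrt_le_sqrt
    nlinarith [sq_nonneg a]
  refine ⟨fun ω => CurveAux.FF (ζ ω), fun ω => CurveAux.GG (ζ ω),
    CurveAux.FF_mono.measurable.comp hζm, CurveAux.GG_mono.measurable.comp hζm,
    ⟨CurveAux.FF, CurveAux.GG, ζ, CurveAux.FF_mono, CurveAux.GG_mono, hζm,
      Filter.EventuallyEq.rfl, Filter.EventuallyEq.rfl⟩, ?_, ?_, ?_⟩
  · -- conditional expectation of ξ is f
    rw [hrep CurveAux.FF]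
    refine (CondHalf.condexp_four_cells (m1 := m1) (μ := μ) hm hC1m hC2m hC3m hC4m
      hq1 hq2 hq3 hq4
      ((CurveAux.FF_mono.measurable.comp CurveAux.measurable_sig1).comp hg)
      ((CurveAux.FF_mono.measurable.comp CurveAux.measurable_sig2).comp hg)
      ((CurveAux.FF_mono.measurable.comp CurveAux.measurable_sig3).comp hf)
      ((CurveAux.FF_mono.measurable.comp CurveAux.measurable_sig4).comp hf)
      (fun ω => le_trans (CurveAux.abs_FF_le _)
        (le_trans (CurveAux.abs_sig1_le (g ω)) (hbnd1 ω)))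
      (fun ω => le_trans (CurveAux.abs_FF_le _)
        (le_trans (CurveAux.abs_sig2_le (g ω)) (hbnd1 ω)))
      (fun ω => le_trans (CurveAux.abs_FF_le _)
        (le_trans (CurveAux.abs_sig3_le (f ω)) (hbnd2 ω)))
      (fun ω => le_trans (CurveAux.abs_FF_le _)
        (le_trans (CurveAux.abs_sig4_le (f ω)) (hbnd2 ω)))
      hbint).trans ?_
    refine Filter.Eventually.of_forall (fun ω => ?_)
    simp only [hσ1, hσ2, hσ3, hσ4, Function.comp]
    linarith [CurveAux.FF_sum (f ω) (g ω)]
  · -- conditional expectation of η is g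
    rw [hrep CurveAux.GG]
    refine (CondHalf.condexp_four_cells (m1 := m1) (μ := μ) hm hC1m hC2m hC3m hC4m
      hq1 hq2 hq3 hq4
      ((CurveAux.GG_mono.measurable.comp CurveAux.measurable_sig1).comp hg)
      ((CurveAux.GG_mono.measurable.comp CurveAux.measurable_sig2).comp hg)
      ((CurveAux.GG_mono.measurable.comp CurveAux.measurable_sig3).comp hf)
      ((CurveAux.GG_mono.measurable.comp CurveAux.measurable_sig4).comp hf)
      (fun ω => le_trans (CurveAux.abs_GG_le _)
        (le_trans (CurveAux.abs_sig1_le (g ω)) (hbnd1 ω)))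
      (fun ω => le_trans (CurveAux.abs_GG_le _)
        (le_trans (CurveAux.abs_sig2_le (g ω)) (hbnd1 ω)))
      (fun ω => le_trans (CurveAux.abs_GG_le _)
        (le_trans (CurveAux.abs_sig3_le (f ω)) (hbnd2 ω)))
      (fun ω => le_trans (CurveAux.abs_GG_le _)
        (le_trans (CurveAux.abs_sig4_le (f ω)) (hbnd2 ω)))
      hbint).trans ?_
    refine Filter.Eventually.of_forall (fun ω => ?_)
    simp only [hσ1, hσ2, hσ3, hσ4, Function.comp]
    linarith [CurveAux.GG_sum (f ω) (g ω)]
  · -- the norm bound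
    refine Filter.Eventually.of_forall (fun ω => ?_)
    have hb : |ζ ω| ≤ 200 * max (euclNorm (f ω, g ω)) 1 := by
      rcases hcell ω with ⟨_, hz⟩ | ⟨_, hz⟩ | ⟨_, hz⟩ | ⟨_, hz⟩
      · rw [hz]
        exact le_trans (CurveAux.abs_sig1_le (g ω)) (by
          have := max_le_max (habs2 (f ω) (g ω)) (le_refl (1:ℝ))
          nlinarith [le_max_right (euclNorm (f ω, g ω)) (1:ℝ)])
      · rw [hz]
        exact le_trans (CurveAux.abs_sig2_le (g ω)) (by
          have := max_le_max (habs2 (f ω) (g ω)) (le_refl (1:ℝ))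
          nlinarith [le_max_right (euclNorm (f ω, g ω)) (1:ℝ)])
      · rw [hz]
        exact le_trans (CurveAux.abs_sig3_le (f ω)) (by
          have := max_le_max (habs1 (f ω) (g ω)) (le_refl (1:ℝ))
          nlinarith [le_max_right (euclNorm (f ω, g ω)) (1:ℝ)])
      · rw [hz]
        exact le_trans (CurveAux.abs_sig4_le (f ω)) (by
          have := max_le_max (habs1 (f ω) (g ω)) (le_refl (1:ℝ))
          nlinarith [le_max_right (euclNorm (f ω, g ω)) (1:ℝ)])
    have h1 : euclNorm (CurveAux.FF (ζ ω), CurveAux.GG (ζ ω))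
        ≤ |CurveAux.FF (ζ ω)| + |CurveAux.GG (ζ ω)| := htri _ _
    have h2 := CurveAux.abs_FF_le (ζ ω)
    have h3 := CurveAux.abs_GG_le (ζ ω)
    have h4 : (1:ℝ) ≤ max (euclNorm (f ω, g ω)) 1 := le_max_right _ _
    linarith
end

section
/- Let (Ω, ℱ, P) be a probability space and suppose there exists an ℱ-measurable random variable U : Ω → [0,1], uniformly distributed on [0,1] and independent of a sub-σ-algebra ℱ₁ ⊆ ℱ, such that for every ℱ₁-measurable h : Ω → [0,1] one has E[1_{{U ≤ h}} ∣ ℱ₁] = h almost surely. Then ℱ is atomless conditionally to ℱ₁. -/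
open MeasureTheory ProbabilityTheory

/- ### Auxiliary lemmas -/

section Aux

/-- The purely real-number combinatorial core: a `[0,1]`-parametrized family `p` over the
rationals which is Lipschitz, bounded by `q` and by `h`, below by `h - (1-q)`, and which never
takes a value strictly between `0` and `h`, is contradictory when `h > 0`. -/
lemma condAtomless_key_pointwise (p : ℚ → ℝ) (h : ℝ) (hpos : 0 < h)
    (hnn : ∀ q : ℚ, 0 ≤ p q) (hleh : ∀ q : ℚ, p q ≤ h)
    (hlip : ∀ q q' : ℚ, 0 < q → (q' : ℚ) < 1 → q ≤ q' → p q' ≤ p q + ((q' : ℝ) - q))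
    (hler : ∀ q : ℚ, 0 < q → q < 1 → p q ≤ (q : ℝ))
    (hgeh : ∀ q : ℚ, 0 < q → q < 1 → h ≤ p q + (1 - (q : ℝ)))
    (hcon : ∀ q : ℚ, 0 < q → q < 1 → ¬(0 < p q ∧ p q < h)) :
    False := by
  have hdich : ∀ q : ℚ, 0 < q → q < 1 → p q = 0 ∨ p q = h := by
    intro q hq0 hq1
    rcases lt_or_ge 0 (p q) with hp | hp
    · right
      have := hcon q hq0 hq1
      push_neg at this
      exact le_antisymm (hleh q) (this hp)
    · left; linarith [hnn q]
  set Z : Set ℝ := {x : ℝ | ∃ q : ℚ, 0 < q ∧ q < 1 ∧ p q = 0 ∧ (q : ℝ) = x} with hZ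
  obtain ⟨q₀, hq₀0, hq₀m⟩ := exists_rat_btwn (show (0:ℝ) < min h 1 by simp [hpos])
  have hq₀0' : 0 < q₀ := by exact_mod_cast hq₀0
  have hq₀1 : q₀ < 1 := by
    have : (q₀ : ℝ) < 1 := lt_of_lt_of_le hq₀m (min_le_right _ _)
    exact_mod_cast this
  have hq₀Z : (q₀ : ℝ) ∈ Z := by
    refine ⟨q₀, hq₀0', hq₀1, ?_, rfl⟩
    rcases hdich q₀ hq₀0' hq₀1 with h0 | hh
    · exact h0
    · exfalso
      have h1 := hler q₀ hq₀0' hq₀1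
      have h2 : h ≤ (q₀ : ℝ) := hh ▸ h1
      have h3 : (q₀ : ℝ) < h := lt_of_lt_of_le hq₀m (min_le_left _ _)
      linarith
  have hZne : Z.Nonempty := ⟨_, hq₀Z⟩
  have hZbdd : BddAbove Z := by
    refine ⟨1, fun x hx => ?_⟩
    obtain ⟨q, hq0, hq1, _, rfl⟩ := hx
    exact_mod_cast hq1.le
  set c := sSup Z with hc
  have hcpos : 0 < c := lt_of_lt_of_le hq₀0 (le_csSup hZbdd hq₀Z)
  have hcle : c ≤ 1 - h := by
    refine csSup_le hZne ?_
    rintro x ⟨q, hq0, hq1, hp0, rfl⟩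
    have := hgeh q hq0 hq1
    rw [hp0] at this; linarith
  obtain ⟨x, hxZ, hxgt⟩ := exists_lt_of_lt_csSup hZne (show c - h/3 < c by linarith)
  obtain ⟨r, hr0, hr1, hrp, rfl⟩ := hxZ
  obtain ⟨r', hr'c, hr'lt⟩ := exists_rat_btwn (show c < min (c + h/3) 1 by
    refine lt_min (by linarith) (by linarith))
  have hr'0 : 0 < r' := by
    have : (0:ℝ) < (r' : ℝ) := lt_trans hcpos hr'c
    exact_mod_cast this
  have hr'1 : r' < 1 := by
    have : (r' : ℝ) < 1 := lt_of_lt_of_le hr'lt (min_le_right _ _)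
    exact_mod_cast this
  have hr'Z : p r' = 0 → False := by
    intro hp0
    have hmem : (r' : ℝ) ∈ Z := ⟨r', hr'0, hr'1, hp0, rfl⟩
    have := le_csSup hZbdd hmem
    linarith
  have hpr' : p r' = h := by
    rcases hdich r' hr'0 hr'1 with h0 | hh
    · exact absurd h0 (fun h0 => hr'Z h0)
    · exact hh
  have hrler' : r ≤ r' := by
    have h1 : (r : ℝ) ≤ c := le_csSup hZbdd ⟨r, hr0, hr1, hrp, rfl⟩
    have : (r : ℝ) ≤ (r' : ℝ) := le_trans h1 hr'c.le
    exact_mod_cast this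
  have hlipr := hlip r r' hr0 hr'1 hrler'
  rw [hpr', hrp] at hlipr
  have h1 : (r : ℝ) ≤ c := le_csSup hZbdd ⟨r, hr0, hr1, hrp, rfl⟩
  have h2 : (r' : ℝ) < c + h/3 := lt_of_lt_of_le hr'lt (min_le_left _ _)
  linarith

variable {Ω : Type*} (m1 : MeasurableSpace Ω) [mF : MeasurableSpace Ω]
  (hm : m1 ≤ mF) (μ : Measure Ω) [IsProbabilityMeasure μ]

omit [IsProbabilityMeasure μ] in
lemma condIndicator_stronglyMeasurable (s : Set Ω) :
    StronglyMeasurable[m1] (condIndicator m1 μ s) := by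
  rw [condIndicator]; exact stronglyMeasurable_condExp

lemma indicator_one_integrable {s : Set Ω} (hs : MeasurableSet s) :
    Integrable (s.indicator (fun _ => (1 : ℝ))) μ :=
  (integrable_const 1).indicator hs

omit [IsProbabilityMeasure μ] in
lemma condIndicator_nonneg (s : Set Ω) : 0 ≤ᵐ[μ] condIndicator m1 μ s :=
  condExp_nonneg (Filter.Eventually.of_forall
    (fun ω => Set.indicator_nonneg (fun _ _ => zero_le_one) ω))

lemma condIndicator_mono {s t : Set Ω} (hs : MeasurableSet s) (ht : MeasurableSet t)
    (hst : s ⊆ t) :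
    condIndicator m1 μ s ≤ᵐ[μ] condIndicator m1 μ t :=
  condExp_mono (indicator_one_integrable μ hs) (indicator_one_integrable μ ht)
    (Filter.Eventually.of_forall fun ω =>
      Set.indicator_le_indicator_of_subset hst (fun _ => zero_le_one) ω)

include hm in
lemma condIndicator_compl {s : Set Ω} (hs : MeasurableSet s) :
    condIndicator m1 μ sᶜ =ᵐ[μ] fun ω => 1 - condIndicator m1 μ s ω := by
  have h1 : sᶜ.indicator (fun _ => (1:ℝ)) = (fun _ => (1:ℝ)) - s.indicator (fun _ => (1:ℝ)) := by
    ext ω; by_cases h : ω ∈ s <;> simp [h]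
  rw [condIndicator, h1]
  calc μ[(fun _ => (1:ℝ)) - s.indicator (fun _ => (1:ℝ)) | m1]
      =ᵐ[μ] μ[(fun _ => (1:ℝ)) | m1] - μ[s.indicator (fun _ => (1:ℝ)) | m1] :=
        condExp_sub (integrable_const 1) (indicator_one_integrable μ hs) m1
    _ =ᵐ[μ] fun ω => 1 - condIndicator m1 μ s ω := by
        refine Filter.EventuallyEq.of_eq ?_
        rw [condExp_const hm (1:ℝ)]
        ext ω
        simp [condIndicator]

lemma condIndicator_diff {s t : Set Ω} (hs : MeasurableSet s) (ht : MeasurableSet t)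
    (hst : s ⊆ t) :
    condIndicator m1 μ (t \ s) =ᵐ[μ]
      fun ω => condIndicator m1 μ t ω - condIndicator m1 μ s ω := by
  have h1 : (t \ s).indicator (fun _ => (1:ℝ))
      = t.indicator (fun _ => (1:ℝ)) - s.indicator (fun _ => (1:ℝ)) := by
    ext ω
    by_cases h : ω ∈ s
    · have : ω ∈ t := hst h
      simp [h, this, Set.indicator_of_notMem (fun hh : ω ∈ t \ s => hh.2 h)]
    · by_cases h' : ω ∈ t
      · simp [h, h', Set.indicator_of_mem (show ω ∈ t \ s from ⟨h', h⟩)]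
      · simp [h, h', Set.indicator_of_notMem (fun hh : ω ∈ t \ s => h' hh.1)]
  rw [condIndicator, h1]
  calc μ[t.indicator (fun _ => (1:ℝ)) - s.indicator (fun _ => (1:ℝ)) | m1]
      =ᵐ[μ] μ[t.indicator (fun _ => (1:ℝ)) | m1] - μ[s.indicator (fun _ => (1:ℝ)) | m1] :=
        condExp_sub (indicator_one_integrable μ ht) (indicator_one_integrable μ hs) m1
    _ = fun ω => condIndicator m1 μ t ω - condIndicator m1 μ s ω := by
        ext ω; simp [condIndicator]

lemma condIndicator_le_add {s t u : Set Ω} (hs : MeasurableSet s) (ht : MeasurableSet t)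
    (hu : MeasurableSet u) (h : s ⊆ t ∪ u) :
    condIndicator m1 μ s ≤ᵐ[μ]
      fun ω => condIndicator m1 μ t ω + condIndicator m1 μ u ω := by
  have hpt : s.indicator (fun _ => (1:ℝ)) ≤
      t.indicator (fun _ => (1:ℝ)) + u.indicator (fun _ => (1:ℝ)) := by
    intro ω
    have h1 : (0:ℝ) ≤ t.indicator (fun _ => (1:ℝ)) ω :=
      Set.indicator_nonneg (fun _ _ => zero_le_one) ω
    have h2 : (0:ℝ) ≤ u.indicator (fun _ => (1:ℝ)) ω :=
      Set.indicator_nonneg (fun _ _ => zero_le_one) ω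
    by_cases hω : ω ∈ s
    · rcases h hω with h' | h' <;>
      · simp only [Set.indicator_of_mem hω, Pi.add_apply]
        rw [Set.indicator_of_mem h'] <;> linarith
    · simp only [Set.indicator_of_notMem hω, Pi.add_apply]
      linarith
  calc condIndicator m1 μ s
      ≤ᵐ[μ] μ[t.indicator (fun _ => (1:ℝ)) + u.indicator (fun _ => (1:ℝ)) | m1] :=
        condExp_mono (indicator_one_integrable μ hs)
          ((indicator_one_integrable μ ht).add (indicator_one_integrable μ hu))
          (Filter.Eventually.of_forall hpt)
    _ =ᵐ[μ] fun ω => condIndicator m1 μ t ω + condIndicator m1 μ u ω := by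
        filter_upwards [condExp_add (indicator_one_integrable μ ht)
          (indicator_one_integrable μ hu) (m := m1)] with ω hω
        simp only [hω, Pi.add_apply, condIndicator]

end Aux

set_option maxHeartbeats 1000000 in
theorem condAtomless_of_uniform_section {Ω : Type*} (m1 : MeasurableSpace Ω)
    [mF : MeasurableSpace Ω] (hm : m1 ≤ mF) (μ : Measure Ω) [IsProbabilityMeasure μ]
    (U : Ω → ℝ) (hU : Measurable U) (hU01 : ∀ ω, U ω ∈ Set.Icc (0 : ℝ) 1)
    (hUlaw : μ.map U = (volume : Measure ℝ).restrict (Set.Icc 0 1))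
    (hUindep : @Indep Ω (MeasurableSpace.comap U inferInstance) m1 mF μ)
    (hUsection : ∀ h : Ω → ℝ, Measurable[m1] h → (∀ ω, h ω ∈ Set.Icc (0 : ℝ) 1) →
      condIndicator m1 μ {ω | U ω ≤ h ω} =ᵐ[μ] h) :
    CondAtomless m1 μ := by
  intro A hA
  classical
  set hh : Ω → ℝ := condIndicator m1 μ A with hhdef
  set C : ℚ → Set Ω := fun q => {ω | U ω ≤ (q : ℝ)} with hCdef
  have hCmeas : ∀ q, MeasurableSet (C q) := fun q => hU measurableSet_Iic
  set p : ℚ → Ω → ℝ := fun q => condIndicator m1 μ (A ∩ C q) with hpdef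
  -- conditional probability of {U ≤ q} is q for q ∈ [0,1]
  have E0 : ∀ q : ℚ, 0 ≤ (q:ℝ) → (q:ℝ) ≤ 1 →
      condIndicator m1 μ (C q) =ᵐ[μ] fun _ => (q:ℝ) :=
    fun q h0 h1 => hUsection (fun _ => (q:ℝ)) measurable_const (fun _ => ⟨h0, h1⟩)
  -- a.e. facts
  have F_nn : ∀ᵐ ω ∂μ, ∀ q : ℚ, 0 ≤ p q ω :=
    ae_all_iff.2 fun q => condIndicator_nonneg m1 μ (A ∩ C q)
  have F_leh : ∀ᵐ ω ∂μ, ∀ q : ℚ, p q ω ≤ hh ω :=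
    ae_all_iff.2 fun q =>
      condIndicator_mono m1 μ ((hA.inter (hCmeas q))) hA Set.inter_subset_left
  have F_ler : ∀ᵐ ω ∂μ, ∀ q : ℚ, 0 < q → q < 1 → p q ω ≤ (q:ℝ) := by
    rw [ae_all_iff]
    intro q
    by_cases hq : 0 < q ∧ q < 1
    · have h0 : (0:ℝ) ≤ (q:ℝ) := by exact_mod_cast hq.1.le
      have h1 : (q:ℝ) ≤ 1 := by exact_mod_cast hq.2.le
      filter_upwards [condIndicator_mono m1 μ (hA.inter (hCmeas q)) (hCmeas q)
        Set.inter_subset_right, E0 q h0 h1] with ω hle heq _ _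
      rw [← heq]; exact hle
    · exact Filter.Eventually.of_forall fun ω h1 h2 => absurd ⟨h1, h2⟩ hq
  have F_geh : ∀ᵐ ω ∂μ, ∀ q : ℚ, 0 < q → q < 1 → hh ω ≤ p q ω + (1 - (q:ℝ)) := by
    rw [ae_all_iff]
    intro q
    by_cases hq : 0 < q ∧ q < 1
    · have h0 : (0:ℝ) ≤ (q:ℝ) := by exact_mod_cast hq.1.le
      have h1 : (q:ℝ) ≤ 1 := by exact_mod_cast hq.2.le
      have hsub : A ⊆ (A ∩ C q) ∪ (C q)ᶜ := by
        intro ω hω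
        by_cases hc : ω ∈ C q
        · exact Or.inl ⟨hω, hc⟩
        · exact Or.inr hc
      filter_upwards [condIndicator_le_add m1 μ hA (hA.inter (hCmeas q))
        (hCmeas q).compl hsub, condIndicator_compl m1 hm μ (hCmeas q),
        E0 q h0 h1] with ω hle hcompl heq _ _
      rw [hcompl, heq] at hle
      exact hle
    · exact Filter.Eventually.of_forall fun ω h1 h2 => absurd ⟨h1, h2⟩ hq
  have F_lip : ∀ᵐ ω ∂μ, ∀ q q' : ℚ, 0 < q → q' < 1 → q ≤ q' →
      p q' ω ≤ p q ω + ((q':ℝ) - (q:ℝ)) := by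
    rw [ae_all_iff]
    intro q
    rw [ae_all_iff]
    intro q'
    by_cases hq : 0 < q ∧ q' < 1 ∧ q ≤ q'
    · obtain ⟨hq0, hq'1, hqq'⟩ := hq
      have h0 : (0:ℝ) ≤ (q:ℝ) := by exact_mod_cast hq0.le
      have h0' : (0:ℝ) ≤ (q':ℝ) := by
        have : 0 < q' := lt_of_lt_of_le hq0 hqq'
        exact_mod_cast this.le
      have h1 : (q:ℝ) ≤ 1 := by
        have : q < 1 := lt_of_le_of_lt hqq' hq'1
        exact_mod_cast this.le
      have h1' : (q':ℝ) ≤ 1 := by exact_mod_cast hq'1.le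
      have hCC : C q ⊆ C q' := by
        intro ω hω
        have : (q:ℝ) ≤ (q':ℝ) := by exact_mod_cast hqq'
        exact le_trans hω this
      have hsub : A ∩ C q' ⊆ (A ∩ C q) ∪ (C q' \ C q) := by
        rintro ω ⟨hωA, hωC⟩
        by_cases hc : ω ∈ C q
        · exact Or.inl ⟨hωA, hc⟩
        · exact Or.inr ⟨hωC, hc⟩
      filter_upwards [condIndicator_le_add m1 μ (hA.inter (hCmeas q'))
          (hA.inter (hCmeas q)) ((hCmeas q').diff (hCmeas q)) hsub,
        condIndicator_diff m1 μ (hCmeas q) (hCmeas q') hCC,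
        E0 q h0 h1, E0 q' h0' h1'] with ω hle hdiff heq heq' _ _ _
      rw [hdiff, heq, heq'] at hle
      exact hle
    · push_neg at hq
      exact Filter.Eventually.of_forall fun ω h1 h2 h3 => absurd h3 (not_le.2 (hq h1 h2))
  -- the key claim
  have hclaim : ∀ᵐ ω ∂μ, 0 < hh ω →
      ∃ q : ℚ, 0 < q ∧ q < 1 ∧ 0 < p q ω ∧ p q ω < hh ω := by
    filter_upwards [F_nn, F_leh, F_ler, F_geh, F_lip] with ω hnn hleh hler hgeh hlip hpos
    by_contra hcon
    push_neg at hcon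
    refine condAtomless_key_pointwise (fun q => p q ω) (hh ω) hpos hnn hleh
      (fun q q' h1 h2 h3 => hlip q q' h1 h2 h3) hler hgeh ?_
    intro q h1 h2 hc
    exact absurd hc.2 (not_lt.2 (hcon q h1 h2 hc.1))
  -- construction of B
  have hpm : ∀ q, Measurable[m1] (p q) :=
    fun q => (condIndicator_stronglyMeasurable m1 μ (A ∩ C q)).measurable
  have hhm : Measurable[m1] hh := (condIndicator_stronglyMeasurable m1 μ A).measurable
  set S : ℚ → Set Ω := fun q => {ω | 0 < p q ω ∧ p q ω < hh ω} with hSdef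
  have hSm1 : ∀ q, MeasurableSet[m1] (S q) := fun q =>
    (measurableSet_lt measurable_const (hpm q)).inter (measurableSet_lt (hpm q) hhm)
  set e : ℕ → ℚ := fun n => Denumerable.ofNat ℚ n with hedef
  have hesurj : ∀ r : ℚ, ∃ n, e n = r := fun r => ⟨_, Denumerable.ofNat_encode r⟩
  set T : ℕ → Set Ω := disjointed (fun n => S (e n)) with hTdef
  have hTm1 : ∀ n, MeasurableSet[m1] (T n) :=
    MeasurableSet.disjointed (fun n => hSm1 (e n))
  have hTsub : ∀ n, T n ⊆ S (e n) := fun n => disjointed_le (fun n => S (e n)) n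
  have hTdisj : Pairwise (Function.onFun Disjoint T) := disjoint_disjointed _
  set B : Set Ω := ⋃ n, A ∩ C (e n) ∩ T n with hBdef
  have hBmeas : MeasurableSet B :=
    MeasurableSet.iUnion fun n => (hA.inter (hCmeas _)).inter (hm _ (hTm1 n))
  have hBA : B ⊆ A := Set.iUnion_subset fun n ω hω => hω.1.1
  have hBT : ∀ n, T n ∩ B = T n ∩ (A ∩ C (e n)) := by
    intro n
    ext ω
    constructor
    · rintro ⟨hωT, hωB⟩
      obtain ⟨m, hωm⟩ := Set.mem_iUnion.1 hωB
      by_cases hmn : m = n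
      · subst hmn; exact ⟨hωT, hωm.1⟩
      · exact (Set.disjoint_iff.1 (hTdisj hmn) (Set.mem_inter hωm.2 hωT)).elim
    · rintro ⟨hωT, hωAC⟩
      exact ⟨hωT, Set.mem_iUnion.2 ⟨n, ⟨hωAC, hωT⟩⟩⟩
  have G : ∀ n, (T n).indicator (condIndicator m1 μ B) =ᵐ[μ] (T n).indicator (p (e n)) := by
    intro n
    have e1 := condExp_indicator (m := m1) (indicator_one_integrable μ hBmeas) (hTm1 n)
    have e2 := condExp_indicator (m := m1)
      (indicator_one_integrable μ (hA.inter (hCmeas (e n)))) (hTm1 n)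
    have hfun : (T n).indicator (B.indicator fun _ => (1:ℝ))
        = (T n).indicator ((A ∩ C (e n)).indicator fun _ => (1:ℝ)) := by
      rw [Set.indicator_indicator, Set.indicator_indicator, hBT n]
    calc (T n).indicator (condIndicator m1 μ B)
        =ᵐ[μ] μ[(T n).indicator (B.indicator fun _ => (1:ℝ)) | m1] := by
          rw [condIndicator]; exact e1.symm
      _ = μ[(T n).indicator ((A ∩ C (e n)).indicator fun _ => (1:ℝ)) | m1] := by
          rw [hfun]
      _ =ᵐ[μ] (T n).indicator (p (e n)) := by
          rw [hpdef]; simp only [condIndicator]; exact e2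
  refine ⟨B, hBmeas, hBA, ?_⟩
  filter_upwards [hclaim, ae_all_iff.2 G] with ω hcl hG hpos
  obtain ⟨q, hq0, hq1, hS1, hS2⟩ := hcl hpos
  have hωU : ω ∈ ⋃ n, T n := by
    rw [hTdef, iUnion_disjointed]
    obtain ⟨n, hn⟩ := hesurj q
    refine Set.mem_iUnion.2 ⟨n, ?_⟩
    show ω ∈ S (e n)
    rw [hn]
    exact ⟨hS1, hS2⟩
  obtain ⟨n, hωT⟩ := Set.mem_iUnion.1 hωU
  have heq := hG n
  rw [Set.indicator_of_mem hωT, Set.indicator_of_mem hωT] at heq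
  have hωS := hTsub n hωT
  constructor
  · rw [heq]; exact hωS.1
  · rw [heq]; exact hωS.2
end
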